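/- arXiv:1604.01091 — 7 statements merged into one kernel-verified Lean document; each statement's English description precedes it below -/
import Mathlib

section
/- Under lexicographic utilities, if the exchange graph G(p) of an assignment p contains a cycle with at least one edge corresponding to a strict preference, then p is not Pareto optimal. -/
open Finset

def IsPartition {N O : Type*} (p : N → Finset O) : Prop :=
  ∀ o : O, ∃! i : N, o ∈ p i

def Dominates {N O : Type*} [Fintype N] (u : N → O → ℝ) (q p : N → Finset O) : Prop :=
  (∀ i, ∑ o ∈ p i, u i o ≤ ∑ o ∈ q i, u i o) ∧ ∃ i, ∑ o ∈ p i, u i o < ∑ o ∈ q i, u i o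

def ParetoOptimal {N O : Type*} [Fintype N] (u : N → O → ℝ) (p : N → Finset O) : Prop :=
  ¬ ∃ q : N → Finset O, IsPartition q ∧ Dominates u q p

/-- Successor index in a cycle of length k. -/
def nextFin {k : ℕ} (hk : 0 < k) (l : Fin k) : Fin k := ⟨(l.1 + 1) % k, Nat.mod_lt _ hk⟩

/-- Utilities are lexicographic: each object is worth more than all strictly less
preferred objects together. -/
def Lexicographic {N O : Type*} [Fintype O] (u : N → O → ℝ) : Prop :=
  ∀ i o, (∑ o' ∈ univ.filter (fun o' => u i o' < u i o), u i o') < u i o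

/-- If the exchange graph G(p) has a cycle with a strict edge, p is not Pareto optimal
(under lexicographic utilities). -/
theorem cycle_with_strict_edge_implies_not_pareto_optimal
    {N O : Type*} [Fintype N] [Fintype O]
    (u : N → O → ℝ) (hpos : ∀ i o, 0 < u i o) (hlex : Lexicographic u)
    (p : N → Finset O) (hp : IsPartition p)
    (k : ℕ) (hk : 2 ≤ k) (c : Fin k → O) (hinj : Function.Injective c)
    (hedge : ∀ l : Fin k, ∀ i : N, c l ∈ p i →
      u i (c l) ≤ u i (c (nextFin (by omega) l)))
    (hstrict : ∃ l : Fin k, ∃ i : N, c l ∈ p i ∧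
      u i (c l) < u i (c (nextFin (by omega) l))) :
    ¬ ParetoOptimal u p := by

  classical
  haveI : NeZero k := ⟨by omega⟩
  have hk0 : 0 < k := by omega
  have hnext : ∀ l : Fin k, nextFin hk0 l = l + 1 := by
    intro l
    apply Fin.ext
    simp [nextFin, Fin.add_def, Nat.mod_eq_of_lt (show 1 < k by omega)]
  have hedge' : ∀ l : Fin k, ∀ i : N, c l ∈ p i → u i (c l) ≤ u i (c (l + 1)) := by
    intro l i h
    have := hedge l i h
    rwa [show (nextFin (by omega) l) = nextFin hk0 l from rfl, hnext] at this
  obtain ⟨l₀, i₀, hl₀, hs₀⟩ := hstrict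
  have hs₀' : u i₀ (c l₀) < u i₀ (c (l₀ + 1)) := by
    rwa [show (nextFin (by omega) l₀) = nextFin hk0 l₀ from rfl, hnext] at hs₀
  set C : Finset O := univ.image c with hC
  set q : N → Finset O :=
    fun i => (p i \ C) ∪ (univ.filter (fun l => c l ∈ p i)).image (fun l => c (l + 1))
    with hqdef
  have himg : ∀ i, ∀ o ∈ (univ.filter (fun l => c l ∈ p i)).image (fun l => c (l + 1)), o ∈ C := by
    intro i o ho
    obtain ⟨l, _, rfl⟩ := Finset.mem_image.mp ho
    exact Finset.mem_image.mpr ⟨l + 1, mem_univ _, rfl⟩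
  have hdisj : ∀ i, Disjoint (p i \ C)
      ((univ.filter (fun l => c l ∈ p i)).image (fun l => c (l + 1))) := by
    intro i
    rw [Finset.disjoint_right]
    intro o ho hof
    exact (Finset.mem_sdiff.mp hof).2 (himg i o ho)
  have hcinj : ∀ i, Set.InjOn (fun l : Fin k => c (l + 1))
      ↑(univ.filter (fun l => c l ∈ p i)) := by
    intro i a _ b _ h
    have := hinj h
    exact add_right_cancel this
  have hinter : ∀ i, p i ∩ C = (univ.filter (fun l => c l ∈ p i)).image c := by
    intro i
    ext o
    simp only [Finset.mem_inter, Finset.mem_image, Finset.mem_filter, mem_univ, true_and, hC]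
    constructor
    · rintro ⟨hpi, l, rfl⟩
      exact ⟨l, hpi, rfl⟩
    · rintro ⟨l, hpi, rfl⟩
      exact ⟨hpi, l, rfl⟩
  have hsumq : ∀ i, ∑ o ∈ q i, u i o
      = (∑ o ∈ p i \ C, u i o) + ∑ l ∈ univ.filter (fun l => c l ∈ p i), u i (c (l + 1)) := by
    intro i
    rw [hqdef]
    simp only
    rw [Finset.sum_union (hdisj i), Finset.sum_image (hcinj i)]
  have hsump : ∀ i, ∑ o ∈ p i, u i o
      = (∑ o ∈ p i \ C, u i o) + ∑ l ∈ univ.filter (fun l => c l ∈ p i), u i (c l) := by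
    intro i
    have h1 : ∑ o ∈ p i ∩ C, u i o + ∑ o ∈ p i \ C, u i o = ∑ o ∈ p i, u i o :=
      Finset.sum_inter_add_sum_sdiff _ _ _
    have h2 : ∑ o ∈ p i ∩ C, u i o = ∑ l ∈ univ.filter (fun l => c l ∈ p i), u i (c l) := by
      rw [hinter i, Finset.sum_image (fun a _ b _ h => hinj h)]
    linarith
  have hweak : ∀ i, ∑ o ∈ p i, u i o ≤ ∑ o ∈ q i, u i o := by
    intro i
    rw [hsumq i, hsump i]
    apply add_le_add_right
    apply Finset.sum_le_sum
    intro l hl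
    exact hedge' l i (Finset.mem_filter.mp hl).2
  have hstr : ∑ o ∈ p i₀, u i₀ o < ∑ o ∈ q i₀, u i₀ o := by
    rw [hsumq i₀, hsump i₀]
    apply add_lt_add_right
    apply Finset.sum_lt_sum
    · intro l hl
      exact hedge' l i₀ (Finset.mem_filter.mp hl).2
    · exact ⟨l₀, Finset.mem_filter.mpr ⟨mem_univ _, hl₀⟩, hs₀'⟩
  have hqpart : IsPartition q := by
    intro o
    by_cases hoC : o ∈ C
    · obtain ⟨m, _, rfl⟩ := Finset.mem_image.mp hoC
      obtain ⟨i, hi, huniq⟩ := hp (c (m - 1))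
      refine ⟨i, ?_, ?_⟩
      · apply Finset.mem_union_right
        exact Finset.mem_image.mpr ⟨m - 1, Finset.mem_filter.mpr ⟨mem_univ _, hi⟩,
          by rw [sub_add_cancel]⟩
      · intro j hj
        rcases Finset.mem_union.mp hj with h | h
        · exact absurd (Finset.mem_image.mpr ⟨m, mem_univ _, rfl⟩) (Finset.mem_sdiff.mp h).2
        · obtain ⟨l, hl, hlm⟩ := Finset.mem_image.mp h
          have hlval : l = m - 1 := eq_sub_of_add_eq (hinj hlm)
          subst hlval
          exact huniq j (Finset.mem_filter.mp hl).2
    · obtain ⟨i, hi, huniq⟩ := hp o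
      refine ⟨i, Finset.mem_union_left _ (Finset.mem_sdiff.mpr ⟨hi, hoC⟩), ?_⟩
      intro j hj
      rcases Finset.mem_union.mp hj with h | h
      · exact huniq j (Finset.mem_sdiff.mp h).1
      · exact absurd (himg j o h) hoC
  intro hpo
  exact hpo ⟨q, hqpart, hweak, ⟨i₀, hstr⟩⟩
end

section
/- Under bivalued utilities with values α > β > 0, if there exists an assignment q with |q(i) ∩ E_i^1| ≥ |p(i) ∩ E_i^1| for all agents i, and some agent j with |q(j) ∩ E_j^1| > |p(j) ∩ E_j^1| and p(j) ∩ E_j^2 ≠ ∅, then p is Pareto dominated (hence not Pareto optimal). -/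
open Finset

lemma exists_partition_sizes {N O : Type*} [DecidableEq N] [DecidableEq O]
    (c : N → ℕ) : ∀ (t : Finset N) (s : Finset O), ∑ i ∈ t, c i = s.card →
    ∃ f : N → Finset O, (∀ i ∈ t, (f i).card = c i) ∧ (∀ i ∉ t, f i = ∅) ∧
      t.biUnion f = s ∧ (∀ i₁ i₂, i₁ ≠ i₂ → Disjoint (f i₁) (f i₂)) := by
  intro t
  induction t using Finset.induction with
  | empty =>
    intro s hs
    refine ⟨fun _ => ∅, by simp, by simp, ?_, by simp⟩
    simp at hs ⊢
    exact (Finset.card_eq_zero.mp hs.symm).symm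
  | @insert a t ha ih =>
    intro s hs
    rw [Finset.sum_insert ha] at hs
    obtain ⟨t₁, ht₁s, ht₁⟩ := Finset.exists_subset_card_eq
      (show c a ≤ s.card by omega)
    obtain ⟨g, hg1, hg2, hg3, hg4⟩ := ih (s \ t₁) (by
      rw [Finset.card_sdiff_of_subset ht₁s, ht₁]; omega)
    have hga : g a = ∅ := hg2 a ha
    refine ⟨Function.update g a t₁, ?_, ?_, ?_, ?_⟩
    · intro i hi
      rcases Finset.mem_insert.mp hi with rfl | hi
      · simp [Function.update_self, ht₁]
      · rw [Function.update_of_ne (ne_of_mem_of_not_mem hi ha)]; exact hg1 i hi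
    · intro i hi
      rw [Finset.mem_insert, not_or] at hi
      rw [Function.update_of_ne hi.1]; exact hg2 i hi.2
    · rw [Finset.biUnion_insert, Function.update_self]
      have : t.biUnion (Function.update g a t₁) = t.biUnion g := by
        apply Finset.biUnion_congr rfl
        intro i hi
        rw [Function.update_of_ne (ne_of_mem_of_not_mem hi ha)]
      rw [this, hg3, Finset.union_sdiff_of_subset ht₁s]
    · intro i₁ i₂ hne
      have hsub : ∀ i, i ≠ a → g i ⊆ s \ t₁ := by
        intro i hia
        by_cases hit : i ∈ t
        · rw [← hg3]; exact Finset.subset_biUnion_of_mem g hit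
        · rw [hg2 i hit]; exact Finset.empty_subset _
      have hdst : ∀ i, i ≠ a → Disjoint t₁ (g i) := by
        intro i hia
        exact Finset.disjoint_left.mpr fun x hx hx' =>
          (Finset.mem_sdiff.mp (hsub i hia hx')).2 hx
      by_cases h1 : i₁ = a
      · subst h1
        rw [Function.update_self, Function.update_of_ne hne.symm]
        exact hdst i₂ hne.symm
      · by_cases h2 : i₂ = a
        · subst h2
          rw [Function.update_self, Function.update_of_ne h1]
          exact (hdst i₁ h1).symm
        · rw [Function.update_of_ne h1, Function.update_of_ne h2]
          exact hg4 i₁ i₂ hne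

lemma partition_disjoint {N O : Type*} {p : N → Finset O} (hp : IsPartition p) :
    ∀ i₁ i₂, i₁ ≠ i₂ → Disjoint (p i₁) (p i₂) := by
  intro i₁ i₂ hne
  refine Finset.disjoint_left.mpr fun x hx hx' => hne ?_
  obtain ⟨i, -, hi⟩ := hp x
  rw [hi i₁ hx, hi i₂ hx']

lemma partition_sum_card {N O : Type*} [Fintype N] [Fintype O] [DecidableEq N]
    [DecidableEq O] {p : N → Finset O} (hp : IsPartition p) :
    ∑ i, (p i).card = Fintype.card O := by
  rw [← Finset.card_biUnion (fun i _ j _ h => partition_disjoint hp i j h)]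
  congr 1
  apply Finset.eq_univ_iff_forall.mpr
  intro o
  obtain ⟨i, hi, -⟩ := hp o
  exact Finset.mem_biUnion.mpr ⟨i, Finset.mem_univ i, hi⟩

/-- Bivalued utilities: if some assignment q gives every agent at least as many top
objects as p, and some agent j strictly more top objects while j holds a low-valued
object in p, then p is Pareto dominated. -/
theorem bivalued_sufficient_condition_for_domination
    {N O : Type*} [Fintype N] [Fintype O]
    (α β : ℝ) (hβ : 0 < β) (hαβ : β < α)
    (u : N → O → ℝ) (hbi : ∀ i o, u i o = α ∨ u i o = β)
    (p q : N → Finset O) (hp : IsPartition p) (hq : IsPartition q)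
    (hge : ∀ i, ((p i).filter (fun o => u i o = α)).card ≤
      ((q i).filter (fun o => u i o = α)).card)
    (hj : ∃ j, ((p j).filter (fun o => u j o = α)).card <
        ((q j).filter (fun o => u j o = α)).card ∧
      ((p j).filter (fun o => u j o = β)).Nonempty) :
    ∃ q' : N → Finset O, IsPartition q' ∧ Dominates u q' p := by
  classical
  obtain ⟨j, hjlt, hjne⟩ := hj
  set a : N → ℕ := fun i => ((p i).filter (fun o => u i o = α)).card with ha
  set b : N → ℕ := fun i => a i + (if i = j then 1 else 0) with hb
  have hble : ∀ i, b i ≤ ((q i).filter (fun o => u i o = α)).card := by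
    intro i
    by_cases hij : i = j
    · subst hij; simp only [hb, if_pos rfl]; exact hjlt
    · simp only [hb, ha, if_neg hij]; simpa using hge i
  choose T hTsub hTcard using fun i => Finset.exists_subset_card_eq (hble i)
  have hTq : ∀ i, T i ⊆ q i := fun i =>
    (hTsub i).trans (Finset.filter_subset _ _)
  have hTα : ∀ i, ∀ o ∈ T i, u i o = α := fun i o ho =>
    (Finset.mem_filter.mp (hTsub i ho)).2
  have hTdisj : ∀ i₁ i₂, i₁ ≠ i₂ → Disjoint (T i₁) (T i₂) := fun i₁ i₂ h =>
    ((partition_disjoint hq i₁ i₂ h).mono (hTq i₁) (hTq i₂))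
  set S : Finset O := Finset.univ.biUnion T with hS
  set R : Finset O := Finset.univ \ S with hR
  have hScard : S.card = ∑ i, b i := by
    rw [hS, Finset.card_biUnion (fun i _ k _ h => hTdisj i k h)]
    exact Finset.sum_congr rfl fun i _ => hTcard i
  have hbp : ∀ i, b i ≤ (p i).card := by
    intro i
    have h2 := Finset.card_filter_add_card_filter_not
      (s := p i) (p := fun o => u i o = α)
    have hai : a i = ((p i).filter (fun o => u i o = α)).card := rfl
    by_cases hij : i = j
    · subst hij
      have hβcard : 1 ≤ ((p i).filter (fun o => ¬ u i o = α)).card := by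
        obtain ⟨x, hx⟩ := hjne
        rw [Finset.mem_filter] at hx
        refine Finset.card_pos.mpr ⟨x, Finset.mem_filter.mpr ⟨hx.1, ?_⟩⟩
        rw [hx.2]; exact ne_of_lt hαβ
      have hb' : b i = a i + 1 := by simp [hb]
      omega
    · have hb' : b i = a i := by simp [hb, hij]
      omega
  set c : N → ℕ := fun i => (p i).card - b i with hc
  have hccard : ∑ i, c i = R.card := by
    have h1 : ∑ i, (p i).card = Fintype.card O := partition_sum_card hp
    have h3 : R.card + S.card = Fintype.card O := by
      rw [hR, Finset.card_sdiff_of_subset (Finset.subset_univ S), Finset.card_univ]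
      exact Nat.sub_add_cancel (by
        rw [← Finset.card_univ]
        exact Finset.card_le_card (Finset.subset_univ S))
    have h2 : ∑ i, c i + S.card = Fintype.card O := by
      rw [hScard, ← Finset.sum_add_distrib, ← h1]
      exact Finset.sum_congr rfl fun i _ => Nat.sub_add_cancel (hbp i)
    exact Nat.add_right_cancel (h2.trans h3.symm)
  obtain ⟨f, hf1, -, hf3, hf4⟩ := exists_partition_sizes c Finset.univ R hccard
  have hfR : ∀ i, f i ⊆ R := by
    intro i
    rw [← hf3]
    exact Finset.subset_biUnion_of_mem f (Finset.mem_univ i)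
  have hTf : ∀ i k, Disjoint (T i) (f k) := by
    intro i k
    refine Finset.disjoint_left.mpr fun x hx hx' => ?_
    have hxS : x ∈ S := Finset.mem_biUnion.mpr ⟨i, Finset.mem_univ i, hx⟩
    exact (Finset.mem_sdiff.mp (hfR k hx')).2 hxS
  -- utility computations
  have hup : ∀ i, ∑ o ∈ p i, u i o = (a i : ℝ) * α + ((p i).card - a i : ℕ) * β := by
    intro i
    rw [← Finset.sum_filter_add_sum_filter_not (p i) (fun o => u i o = α)]
    have e1 : ∑ o ∈ (p i).filter (fun o => u i o = α), u i o = (a i : ℝ) * α := by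
      rw [Finset.sum_congr rfl (fun o ho => (Finset.mem_filter.mp ho).2),
        Finset.sum_const, nsmul_eq_mul]
    have e2 : ∑ o ∈ (p i).filter (fun o => ¬ u i o = α), u i o
        = (((p i).card - a i : ℕ) : ℝ) * β := by
      rw [Finset.sum_congr rfl (fun o ho => by
        rcases hbi i o with h | h
        · exact absurd h (Finset.mem_filter.mp ho).2
        · exact h), Finset.sum_const, nsmul_eq_mul]
      congr 1
      have := Finset.card_filter_add_card_filter_not
        (s := p i) (p := fun o => u i o = α)
      simp only [ha]
      norm_cast
      omega
    rw [e1, e2]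
  have huq : ∀ i, (b i : ℝ) * α + (c i : ℝ) * β ≤ ∑ o ∈ T i ∪ f i, u i o := by
    intro i
    rw [Finset.sum_union (hTf i i)]
    have e1 : ∑ o ∈ T i, u i o = (b i : ℝ) * α := by
      rw [Finset.sum_congr rfl (hTα i), Finset.sum_const, nsmul_eq_mul, hTcard i]
    have e2 : (c i : ℝ) * β ≤ ∑ o ∈ f i, u i o := by
      have := Finset.card_nsmul_le_sum (f i) (u i) β (fun o _ => by
        rcases hbi i o with h | h
        · rw [h]; exact le_of_lt hαβ
        · rw [h])
      rw [nsmul_eq_mul, hf1 i (Finset.mem_univ i)] at this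
      exact this
    linarith [e2, e1.le]
  have key : ∀ i, ∑ o ∈ p i, u i o + (if i = j then α - β else 0)
      ≤ ∑ o ∈ T i ∪ f i, u i o := by
    intro i
    rw [hup i]
    refine le_trans ?_ (huq i)
    have hle : a i ≤ (p i).card := Finset.card_le_card (Finset.filter_subset _ _)
    have hbpi := hbp i
    have hc' : (c i : ℝ) = ((p i).card : ℝ) - (b i : ℝ) := by
      simp only [hc]; push_cast [hbpi]; ring
    have hcast : ((((p i).card - a i : ℕ)) : ℝ) = ((p i).card : ℝ) - (a i : ℝ) := by
      push_cast [hle]; ring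
    by_cases hij : i = j
    · rw [if_pos hij, hc', hcast]
      have hb' : (b i : ℝ) = (a i : ℝ) + 1 := by simp [hb, hij]
      rw [hb']
      exact le_of_eq (by ring)
    · rw [if_neg hij, hc', hcast]
      have hb' : (b i : ℝ) = (a i : ℝ) := by simp [hb, hij]
      rw [hb']
      exact le_of_eq (by ring)
  refine ⟨fun i => T i ∪ f i, ?_, ?_, ⟨j, ?_⟩⟩
  · -- IsPartition
    intro o
    by_cases hoS : o ∈ S
    · obtain ⟨i, -, hi⟩ := Finset.mem_biUnion.mp hoS
      refine ⟨i, Finset.mem_union_left _ hi, fun k hk => ?_⟩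
      rcases Finset.mem_union.mp hk with h | h
      · by_contra hne
        exact (Finset.disjoint_left.mp (hTdisj k i hne) h) hi
      · exact absurd hi (Finset.disjoint_left.mp (hTf i k).symm h)
    · have hoR : o ∈ R := Finset.mem_sdiff.mpr ⟨Finset.mem_univ o, hoS⟩
      rw [← hf3] at hoR
      obtain ⟨i, -, hi⟩ := Finset.mem_biUnion.mp hoR
      refine ⟨i, Finset.mem_union_right _ hi, fun k hk => ?_⟩
      rcases Finset.mem_union.mp hk with h | h
      · exact absurd (Finset.mem_biUnion.mpr ⟨k, Finset.mem_univ k, h⟩) hoS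
      · by_contra hne
        exact (Finset.disjoint_left.mp (hf4 k i hne) h) hi
  · intro i
    show ∑ o ∈ p i, u i o ≤ ∑ o ∈ T i ∪ f i, u i o
    have hk := key i
    by_cases hij : i = j
    · rw [if_pos hij] at hk; linarith
    · rw [if_neg hij] at hk; linarith
  · show ∑ o ∈ p j, u j o < ∑ o ∈ T j ∪ f j, u j o
    have hk := key j
    rw [if_pos rfl] at hk
    linarith
end

section
/- Under bivalued utilities (values α > β > 0), an assignment p is Pareto dominated if and only if there exists an assignment q such that |q(i) ∩ E_i^1| ≥ |p(i) ∩ E_i^1| for every agent i, and there exists an agent j with |q(j) ∩ E_j^1| > |p(j) ∩ E_j^1| and p(j) ∩ E_j^2 ≠ ∅. -/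
open Finset

set_option linter.unusedSectionVars false
set_option linter.unusedVariables false


section A
variable {N O : Type*} [Fintype N] [Fintype O] [DecidableEq O] [DecidableEq N]

lemma part_disj {p : N → Finset O} (hp : IsPartition p) {i j : N} (hij : i ≠ j) :
    Disjoint (p i) (p j) := by
  rw [Finset.disjoint_left]
  intro o hi hj
  obtain ⟨k, -, hk⟩ := hp o
  exact hij ((hk i hi).trans (hk j hj).symm)

lemma part_card_sum {p : N → Finset O} (hp : IsPartition p) :
    ∑ i, (p i).card = Fintype.card O := by
  classical
  rw [← Finset.card_biUnion (fun i _ j _ hij => part_disj hp hij)]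
  congr 1
  apply Finset.eq_univ_iff_forall.2
  intro o
  obtain ⟨i, hi, -⟩ := hp o
  exact Finset.mem_biUnion.2 ⟨i, Finset.mem_univ i, hi⟩

lemma sum_bival {a b : ℝ} (hab : a ≠ b) (f : O → ℝ) (hf : ∀ o, f o = a ∨ f o = b)
    (s : Finset O) :
    ∑ o ∈ s, f o = a * (s.filter (fun o => f o = a)).card
      + b * (s.filter (fun o => f o = b)).card := by
  rw [← Finset.sum_filter_add_sum_filter_not s (fun o => f o = a)]
  congr 1
  · rw [Finset.sum_congr rfl (fun o ho => (Finset.mem_filter.1 ho).2), Finset.sum_const,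
      nsmul_eq_mul, mul_comm]
  · rw [show s.filter (fun o => ¬ f o = a) = s.filter (fun o => f o = b) from
      Finset.filter_congr (fun o _ => by rcases hf o with h | h <;> simp [h, hab, Ne.symm hab]),
      Finset.sum_congr rfl (fun o ho => (Finset.mem_filter.1 ho).2), Finset.sum_const,
      nsmul_eq_mul, mul_comm]

lemma card_bival {a b : ℝ} (hab : a ≠ b) (f : O → ℝ) (hf : ∀ o, f o = a ∨ f o = b)
    (s : Finset O) :
    s.card = (s.filter (fun o => f o = a)).card + (s.filter (fun o => f o = b)).card := by
  rw [← Finset.card_union_of_disjoint, ← Finset.filter_or]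
  · rw [Finset.filter_true_of_mem (fun o _ => hf o)]
  · rw [Finset.disjoint_filter]
    rintro o - h1 h2
    exact hab (h1 ▸ h2 ▸ rfl)

end A
section B
variable {N O : Type*} [Fintype N] [Fintype O] [DecidableEq O] [DecidableEq N]

lemma exists_distribution (s : Finset N) (c : N → ℕ) :
    ∀ R : Finset O, ∑ i ∈ s, c i = R.card →
    ∃ P : N → Finset O, (∀ i, P i ⊆ R) ∧ (∀ i ∉ s, P i = ∅) ∧
      (∀ o ∈ R, ∃! i, o ∈ P i) ∧ (∀ i ∈ s, (P i).card = c i) := by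
  induction s using Finset.cons_induction with
  | empty =>
    intro R hR
    simp only [Finset.sum_empty] at hR
    rw [eq_comm, Finset.card_eq_zero] at hR
    exact ⟨fun _ => ∅, by simp [hR], by simp, by simp [hR], by simp⟩
  | cons a s ha ih =>
    intro R hR
    rw [Finset.sum_cons] at hR
    have hca : c a ≤ R.card := by omega
    obtain ⟨K, hKR, hKcard⟩ := Finset.exists_subset_card_eq hca
    obtain ⟨P, hPsub, hPout, hPuniq, hPcard⟩ := ih (R \ K)
      (by rw [Finset.card_sdiff_of_subset hKR]; omega)
    refine ⟨fun i => if i = a then K else P i, ?_, ?_, ?_, ?_⟩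
    · intro i
      by_cases h : i = a <;> simp [h, hKR, fun i => (hPsub i).trans (Finset.sdiff_subset)]
    · intro i hi
      have h1 : i ≠ a := fun h => hi (h ▸ Finset.mem_cons_self a s)
      have h2 : i ∉ s := fun h => hi (Finset.mem_cons.2 (Or.inr h))
      simp [h1, hPout i h2]
    · intro o ho
      by_cases hoK : o ∈ K
      · refine ⟨a, by simp [hoK], ?_⟩
        intro i hi
        by_cases h : i = a
        · exact h
        · simp only [h, if_neg] at hi
          exact absurd (hPsub i hi) (by simp [hoK])
      · have hoRK : o ∈ R \ K := Finset.mem_sdiff.2 ⟨ho, hoK⟩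
        obtain ⟨i, hi, hu⟩ := hPuniq o hoRK
        have hia : i ≠ a := by
          rintro rfl
          exact (Finset.mem_sdiff.1 (hPsub i hi)).2 (by
            have := hPout
            exact absurd (hPsub i hi) (by simp_all))
        refine ⟨i, by simp [hia, hi], ?_⟩
        intro k hk
        by_cases h : k = a
        · rw [h] at hk; simp [hoK] at hk
        · simp only [h, if_neg] at hk
          exact hu k hk
    · intro i hi
      by_cases h : i = a
      · simp [h, hKcard]
      · have : i ∈ s := by
          rcases Finset.mem_cons.1 hi with h' | h'
          · exact absurd h' h
          · exact h'
        simp [h, hPcard i this]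

lemma hall_demands (E : N → Finset O) (d : N → ℕ)
    (hall : ∀ T : Finset N, ∑ i ∈ T, d i ≤ (T.biUnion E).card) :
    ∃ S : N → Finset O, (∀ i, S i ⊆ E i) ∧ (∀ i, (S i).card = d i) ∧
      (∀ i j, i ≠ j → Disjoint (S i) (S j)) := by
  classical
  set ι := Σ i : N, Fin (d i)
  have key := (Finset.all_card_le_biUnion_card_iff_exists_injective
      (fun x : ι => E x.1)).1 ?_
  · obtain ⟨f, hfinj, hft⟩ := key
    refine ⟨fun i => (Finset.univ : Finset (Fin (d i))).image (fun k => f ⟨i, k⟩), ?_, ?_, ?_⟩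
    · intro i o ho
      obtain ⟨k, -, rfl⟩ := Finset.mem_image.1 ho
      exact hft ⟨i, k⟩
    · intro i
      rw [Finset.card_image_of_injective _ (fun k l hkl => by
        injection hfinj hkl with h1 h2), Finset.card_univ, Fintype.card_fin]
    · intro i j hij
      rw [Finset.disjoint_left]
      rintro o ho ho'
      obtain ⟨k, -, rfl⟩ := Finset.mem_image.1 ho
      obtain ⟨l, -, hl⟩ := Finset.mem_image.1 ho'
      have := hfinj hl
      exact hij (congrArg Sigma.fst this).symm
  · intro s
    have h1 : s ⊆ (s.image Sigma.fst).sigma (fun i => Finset.univ) := by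
      intro x hx
      exact Finset.mem_sigma.2 ⟨Finset.mem_image_of_mem _ hx, Finset.mem_univ _⟩
    have h2 : s.card ≤ ∑ i ∈ s.image Sigma.fst, d i := by
      calc s.card ≤ ((s.image Sigma.fst).sigma (fun i => Finset.univ)).card :=
            Finset.card_le_card h1
        _ = ∑ i ∈ s.image Sigma.fst, d i := by
            rw [Finset.card_sigma]; simp
    have h3 : s.biUnion (fun x : ι => E x.1) = (s.image Sigma.fst).biUnion E := by
      ext o
      simp only [Finset.mem_biUnion, Finset.mem_image]
      constructor
      · rintro ⟨x, hx, hxo⟩; exact ⟨x.1, ⟨x, hx, rfl⟩, hxo⟩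
      · rintro ⟨i, ⟨x, hx, rfl⟩, hio⟩; exact ⟨x, hx, hio⟩
    rw [h3]
    exact h2.trans (hall _)

end B
section C
variable {N O : Type*} [Fintype N] [Fintype O] [DecidableEq O] [DecidableEq N]

lemma disj_sum_le (E F : N → Finset O) (hFE : ∀ i, F i ⊆ E i)
    (hdisj : ∀ i j, i ≠ j → Disjoint (F i) (F j)) (T : Finset N) :
    ∑ i ∈ T, (F i).card ≤ (T.biUnion E).card := by
  rw [← Finset.card_biUnion (fun i _ j _ hij => hdisj i j hij)]
  exact Finset.card_le_card (Finset.biUnion_mono (fun i _ => hFE i))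

lemma tight_union' (E : N → Finset O) (a : N → ℕ)
    (base : ∀ T : Finset N, ∑ i ∈ T, a i ≤ (T.biUnion E).card)
    {T T' : Finset N} (hT : ((T.biUnion E)).card = ∑ i ∈ T, a i)
    (hT' : ((T'.biUnion E)).card = ∑ i ∈ T', a i) :
    (((T ∪ T').biUnion E)).card = ∑ i ∈ T ∪ T', a i := by
  have hbu : (T ∪ T').biUnion E = T.biUnion E ∪ T'.biUnion E := by
    ext o
    simp only [Finset.mem_biUnion, Finset.mem_union, or_and_right, exists_or]
  have hbi : (T ∩ T').biUnion E ⊆ T.biUnion E ∩ T'.biUnion E := by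
    intro o ho
    obtain ⟨i, hi, hio⟩ := Finset.mem_biUnion.1 ho
    rw [Finset.mem_inter] at hi
    exact Finset.mem_inter.2 ⟨Finset.mem_biUnion.2 ⟨i, hi.1, hio⟩,
      Finset.mem_biUnion.2 ⟨i, hi.2, hio⟩⟩
  have h1 : (T.biUnion E ∪ T'.biUnion E).card + (T.biUnion E ∩ T'.biUnion E).card
      = (T.biUnion E).card + (T'.biUnion E).card := Finset.card_union_add_card_inter _ _
  have h2 : ∑ i ∈ T ∪ T', a i + ∑ i ∈ T ∩ T', a i = ∑ i ∈ T, a i + ∑ i ∈ T', a i :=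
    Finset.sum_union_inter
  have h3 : ∑ i ∈ T ∪ T', a i ≤ (T.biUnion E ∪ T'.biUnion E).card := hbu ▸ base (T ∪ T')
  have h4 := base (T ∩ T')
  have h5 := Finset.card_le_card hbi
  rw [hbu]
  omega

lemma tight_biUnion (E : N → Finset O) (a : N → ℕ)
    (base : ∀ T : Finset N, ∑ i ∈ T, a i ≤ (T.biUnion E).card)
    (J : Finset N) (T : N → Finset N)
    (ht : ∀ j ∈ J, (((T j).biUnion E)).card = ∑ i ∈ T j, a i) :
    (((J.biUnion T).biUnion E)).card = ∑ i ∈ J.biUnion T, a i := by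
  induction J using Finset.cons_induction with
  | empty => simp
  | cons j J hj ih =>
    rw [Finset.cons_eq_insert, Finset.biUnion_insert]
    exact tight_union' E a base (ht j (Finset.mem_cons_self j J))
      (ih (fun k hk => ht k (Finset.mem_cons.2 (Or.inr hk))))

end C
/-- Characterization of Pareto domination under bivalued utilities. -/
theorem bivalued_pareto_dominated_iff
    {N O : Type*} [Fintype N] [Fintype O]
    (α β : ℝ) (hβ : 0 < β) (hαβ : β < α)
    (u : N → O → ℝ) (hbi : ∀ i o, u i o = α ∨ u i o = β)
    (p : N → Finset O) (hp : IsPartition p) :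
    (∃ q : N → Finset O, IsPartition q ∧ Dominates u q p) ↔
      ∃ q : N → Finset O, IsPartition q ∧
        (∀ i, ((p i).filter (fun o => u i o = α)).card ≤
          ((q i).filter (fun o => u i o = α)).card) ∧
        ∃ j, ((p j).filter (fun o => u j o = α)).card <
            ((q j).filter (fun o => u j o = α)).card ∧
          ((p j).filter (fun o => u j o = β)).Nonempty := by
  classical
  have hab : α ≠ β := ne_of_gt hαβ
  have hsum : ∀ (i : N) (s : Finset O), ∑ o ∈ s, u i o
      = α * ((s.filter (fun o => u i o = α)).card : ℝ)
        + β * ((s.filter (fun o => u i o = β)).card : ℝ) :=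
    fun i s => sum_bival hab (u i) (hbi i) s
  have hcard : ∀ (i : N) (s : Finset O), s.card
      = (s.filter (fun o => u i o = α)).card + (s.filter (fun o => u i o = β)).card :=
    fun i s => card_bival hab (u i) (hbi i) s
  constructor
  · rintro ⟨q, hq, hdom⟩
    by_contra hno
    set E : N → Finset O := fun i => Finset.univ.filter (fun o => u i o = α) with hE
    have hpE : ∀ i, (p i).filter (fun o => u i o = α) ⊆ E i := fun i o ho =>
      Finset.mem_filter.2 ⟨Finset.mem_univ o, (Finset.mem_filter.1 ho).2⟩
    have hqE : ∀ i, (q i).filter (fun o => u i o = α) ⊆ E i := fun i o ho =>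
      Finset.mem_filter.2 ⟨Finset.mem_univ o, (Finset.mem_filter.1 ho).2⟩
    have hpdisj : ∀ i i', i ≠ i' → Disjoint ((p i).filter (fun o => u i o = α))
        ((p i').filter (fun o => u i' o = α)) := fun i i' h =>
      Finset.disjoint_of_subset_left (Finset.filter_subset _ _)
        (Finset.disjoint_of_subset_right (Finset.filter_subset _ _) (part_disj hp h))
    have hqdisj : ∀ i i', i ≠ i' → Disjoint ((q i).filter (fun o => u i o = α))
        ((q i').filter (fun o => u i' o = α)) := fun i i' h =>
      Finset.disjoint_of_subset_left (Finset.filter_subset _ _)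
        (Finset.disjoint_of_subset_right (Finset.filter_subset _ _) (part_disj hq h))
    have base : ∀ T : Finset N, ∑ i ∈ T, ((p i).filter (fun o => u i o = α)).card
        ≤ (T.biUnion E).card := disj_sum_le E _ hpE hpdisj
    have htight : ∀ j, ((p j).filter (fun o => u j o = β)).Nonempty →
        ∃ T : Finset N, j ∈ T ∧ (T.biUnion E).card
          = ∑ i ∈ T, ((p i).filter (fun o => u i o = α)).card := by
      intro j hj
      by_contra hT
      push_neg at hT
      set d : N → ℕ := fun i =>
        ((p i).filter (fun o => u i o = α)).card + (if i = j then 1 else 0) with hd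
      have hallcond : ∀ T : Finset N, ∑ i ∈ T, d i ≤ (T.biUnion E).card := by
        intro T
        have h0 := base T
        have hsd : ∑ i ∈ T, d i = (∑ i ∈ T, ((p i).filter (fun o => u i o = α)).card)
            + (if j ∈ T then 1 else 0) := by
          rw [hd, Finset.sum_add_distrib]
          congr 1
          exact Finset.sum_ite_eq' T j (fun _ => 1)
        by_cases hjT : j ∈ T
        · have h2 := hT T hjT
          rw [hsd, if_pos hjT]
          omega
        · rw [hsd, if_neg hjT]
          omega
      obtain ⟨S, hSE, hScard, hSdisj⟩ := hall_demands E d hallcond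
      have hSα : ∀ i, ∀ o ∈ S i, u i o = α := fun i o ho =>
        (Finset.mem_filter.1 (hSE i ho)).2
      set q' : N → Finset O := fun i =>
        if i = j then S j ∪ (Finset.univ \ Finset.univ.biUnion S) else S i with hq'def
      have hSq' : ∀ i, S i ⊆ q' i := by
        intro i o ho
        by_cases h : i = j
        · subst h
          simp only [hq'def, if_pos rfl]
          exact Finset.mem_union_left _ ho
        · simp only [hq'def, if_neg h]
          exact ho
      have hSsub : ∀ i, S i ⊆ (q' i).filter (fun o => u i o = α) := fun i o ho =>
        Finset.mem_filter.2 ⟨hSq' i ho, hSα i o ho⟩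
      have hcount : ∀ i, d i ≤ ((q' i).filter (fun o => u i o = α)).card := fun i =>
        hScard i ▸ Finset.card_le_card (hSsub i)
      apply hno
      refine ⟨q', ?_, ?_, j, ?_, hj⟩
      · intro o
        by_cases ho : o ∈ Finset.univ.biUnion S
        · obtain ⟨i, -, hi⟩ := Finset.mem_biUnion.1 ho
          refine ⟨i, hSq' i hi, ?_⟩
          intro i' hi'
          by_cases h : i' = j
          · subst h
            simp only [hq'def, if_pos rfl] at hi'
            rcases Finset.mem_union.1 hi' with h' | h'
            · by_contra hne
              exact (Finset.disjoint_left.1 (hSdisj i' i hne) h') hi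
            · exact absurd ho (Finset.mem_sdiff.1 h').2
          · simp only [hq'def, if_neg h] at hi'
            by_contra hne
            exact (Finset.disjoint_left.1 (hSdisj i' i hne) hi') hi
        · refine ⟨j, ?_, ?_⟩
          · simp only [hq'def, if_pos rfl]
            exact Finset.mem_union_right _ (Finset.mem_sdiff.2 ⟨Finset.mem_univ o, ho⟩)
          · intro i' hi'
            by_cases h : i' = j
            · exact h
            · simp only [hq'def, if_neg h] at hi'
              exact absurd (Finset.mem_biUnion.2 ⟨i', Finset.mem_univ i', hi'⟩) ho
      · intro i
        refine le_trans ?_ (hcount i)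
        rw [hd]
        exact Nat.le_add_right _ _
      · refine lt_of_lt_of_le ?_ (hcount j)
        rw [hd]
        simp
    have htight2 : ∀ j, ∃ Tj : Finset N, ((p j).filter (fun o => u j o = β)).Nonempty →
        j ∈ Tj ∧ (Tj.biUnion E).card
          = ∑ i ∈ Tj, ((p i).filter (fun o => u i o = α)).card := by
      intro j
      by_cases h : ((p j).filter (fun o => u j o = β)).Nonempty
      · obtain ⟨T, hT⟩ := htight j h
        exact ⟨T, fun _ => hT⟩
      · exact ⟨∅, fun h' => absurd h' h⟩
    choose T hT using htight2
    set J : Finset N := Finset.univ.filter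
      (fun j => ((p j).filter (fun o => u j o = β)).Nonempty) with hJ
    set W : Finset N := J.biUnion T with hW
    have hWt : (W.biUnion E).card = ∑ i ∈ W, ((p i).filter (fun o => u i o = α)).card :=
      tight_biUnion E _ base J T (fun j hj => (hT j (Finset.mem_filter.1 hj).2).2)
    have hJW : ∀ j, ((p j).filter (fun o => u j o = β)).Nonempty → j ∈ W := fun j hj =>
      Finset.mem_biUnion.2 ⟨j, Finset.mem_filter.2 ⟨Finset.mem_univ j, hj⟩, (hT j hj).1⟩
    have hout : ∀ i, i ∉ W → (p i).filter (fun o => u i o = β) = ∅ := by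
      intro i hi
      by_contra h
      exact hi (hJW i (Finset.nonempty_iff_ne_empty.2 h))
    -- F2
    have hF2 : ∑ i ∈ W, ((q i).filter (fun o => u i o = α)).card
        ≤ ∑ i ∈ W, ((p i).filter (fun o => u i o = α)).card :=
      le_trans (disj_sum_le E _ hqE hqdisj W) (le_of_eq hWt)
    -- conversion
    have hconv1 : ∀ i (s : Finset O), ∑ o ∈ s, u i o
        = (α - β) * ((s.filter (fun o => u i o = α)).card : ℝ) + β * (s.card : ℝ) := by
      intro i s
      rw [hsum i s, hcard i s]
      push_cast
      ring
    have eP : ∑ i ∈ W, ∑ o ∈ p i, u i o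
        = (α - β) * ((∑ i ∈ W, ((p i).filter (fun o => u i o = α)).card : ℕ) : ℝ)
          + β * ((∑ i ∈ W, (p i).card : ℕ) : ℝ) := by
      rw [Finset.sum_congr rfl (fun i _ => hconv1 i (p i)), Finset.sum_add_distrib,
        ← Finset.mul_sum, ← Finset.mul_sum]
      push_cast
      ring
    have eQ : ∑ i ∈ W, ∑ o ∈ q i, u i o
        = (α - β) * ((∑ i ∈ W, ((q i).filter (fun o => u i o = α)).card : ℕ) : ℝ)
          + β * ((∑ i ∈ W, (q i).card : ℕ) : ℝ) := by
      rw [Finset.sum_congr rfl (fun i _ => hconv1 i (q i)), Finset.sum_add_distrib,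
        ← Finset.mul_sum, ← Finset.mul_sum]
      push_cast
      ring
    have ePout : ∑ i ∈ Wᶜ, ∑ o ∈ p i, u i o = α * ((∑ i ∈ Wᶜ, (p i).card : ℕ) : ℝ) := by
      have h1 : ∀ i ∈ Wᶜ, ∑ o ∈ p i, u i o = α * ((p i).card : ℝ) := by
        intro i hi
        have h0 := hout i (Finset.mem_compl.1 hi)
        rw [hsum i (p i), hcard i (p i), h0]
        simp
      rw [Finset.sum_congr rfl h1, ← Finset.mul_sum]
      push_cast
      ring
    have eQout : ∑ i ∈ Wᶜ, ∑ o ∈ q i, u i o ≤ α * ((∑ i ∈ Wᶜ, (q i).card : ℕ) : ℝ) := by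
      have h1 : ∀ i ∈ Wᶜ, ∑ o ∈ q i, u i o ≤ α * ((q i).card : ℝ) := by
        intro i _
        have h2 := Finset.sum_le_card_nsmul (q i) (fun o => u i o) α
          (fun o _ => (hbi i o).elim le_of_eq (fun h => (le_of_eq h).trans hαβ.le))
        rw [nsmul_eq_mul] at h2
        linarith
      calc ∑ i ∈ Wᶜ, ∑ o ∈ q i, u i o ≤ ∑ i ∈ Wᶜ, α * ((q i).card : ℝ) :=
            Finset.sum_le_sum h1
        _ = α * ((∑ i ∈ Wᶜ, (q i).card : ℕ) : ℝ) := by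
            rw [← Finset.mul_sum]
            push_cast
            ring
    have hcardsP : ∑ i ∈ W, (p i).card + ∑ i ∈ Wᶜ, (p i).card = Fintype.card O := by
      rw [Finset.sum_add_sum_compl]
      exact part_card_sum hp
    have hcardsQ : ∑ i ∈ W, (q i).card + ∑ i ∈ Wᶜ, (q i).card = Fintype.card O := by
      rw [Finset.sum_add_sum_compl]
      exact part_card_sum hq
    have hS1 : ∑ i ∈ W, ∑ o ∈ p i, u i o ≤ ∑ i ∈ W, ∑ o ∈ q i, u i o :=
      Finset.sum_le_sum (fun i _ => hdom.1 i)
    have hS2 : ∑ i ∈ W, ∑ o ∈ p i, u i o + ∑ i ∈ Wᶜ, ∑ o ∈ p i, u i o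
        < ∑ i ∈ W, ∑ o ∈ q i, u i o + ∑ i ∈ Wᶜ, ∑ o ∈ q i, u i o := by
      rw [Finset.sum_add_sum_compl, Finset.sum_add_sum_compl]
      exact Finset.sum_lt_sum (fun i _ => hdom.1 i)
        (hdom.2.imp (fun i hi => ⟨Finset.mem_univ i, hi⟩))
    have hF2r : ((∑ i ∈ W, ((q i).filter (fun o => u i o = α)).card : ℕ) : ℝ)
        ≤ ((∑ i ∈ W, ((p i).filter (fun o => u i o = α)).card : ℕ) : ℝ) := by
      exact_mod_cast hF2
    have hMP : ((∑ i ∈ W, (p i).card : ℕ) : ℝ) + ((∑ i ∈ Wᶜ, (p i).card : ℕ) : ℝ)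
        = ((Fintype.card O : ℕ) : ℝ) := by exact_mod_cast hcardsP
    have hMQ : ((∑ i ∈ W, (q i).card : ℕ) : ℝ) + ((∑ i ∈ Wᶜ, (q i).card : ℕ) : ℝ)
        = ((Fintype.card O : ℕ) : ℝ) := by exact_mod_cast hcardsQ
    have m1 : (α - β) * ((∑ i ∈ W, ((q i).filter (fun o => u i o = α)).card : ℕ) : ℝ)
        ≤ (α - β) * ((∑ i ∈ W, ((p i).filter (fun o => u i o = α)).card : ℕ) : ℝ) :=
      mul_le_mul_of_nonneg_left hF2r (by linarith)
    rw [eP, eQ] at hS1 hS2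
    rw [ePout] at hS2
    have hsle : ((∑ i ∈ W, (p i).card : ℕ) : ℝ) ≤ ((∑ i ∈ W, (q i).card : ℕ) : ℝ) := by
      by_contra hcon
      push_neg at hcon
      have := mul_lt_mul_of_pos_left hcon hβ
      linarith
    have m5 : (α - β) * ((∑ i ∈ W, (p i).card : ℕ) : ℝ)
        ≤ (α - β) * ((∑ i ∈ W, (q i).card : ℕ) : ℝ) :=
      mul_le_mul_of_nonneg_left hsle (by linarith)
    have hMPa : α * (((∑ i ∈ W, (p i).card : ℕ) : ℝ) + ((∑ i ∈ Wᶜ, (p i).card : ℕ) : ℝ))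
        = α * ((Fintype.card O : ℕ) : ℝ) := by rw [hMP]
    have hMQa : α * (((∑ i ∈ W, (q i).card : ℕ) : ℝ) + ((∑ i ∈ Wᶜ, (q i).card : ℕ) : ℝ))
        = α * ((Fintype.card O : ℕ) : ℝ) := by rw [hMQ]
    nlinarith [hS2, eQout, m1, m5, hMPa, hMQa]
  · rintro ⟨q', hq', hge, j, hjlt, hjne⟩
    have hbj : 1 ≤ ((p j).filter (fun o => u j o = β)).card := Finset.card_pos.2 hjne
    set k : N → ℕ := fun i =>
      ((p i).filter (fun o => u i o = α)).card + (if i = j then 1 else 0) with hk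
    set c : N → ℕ := fun i =>
      ((p i).filter (fun o => u i o = β)).card - (if i = j then 1 else 0) with hc
    have hkle : ∀ i, k i ≤ ((q' i).filter (fun o => u i o = α)).card := by
      intro i
      by_cases h : i = j
      · subst h
        simp [hk]
        omega
      · simp only [hk, if_neg h, add_zero]
        exact hge i
    choose K hKsub hKcard using fun i => Finset.exists_subset_card_eq (hkle i)
    have hKq' : ∀ i, K i ⊆ q' i := fun i => (hKsub i).trans (Finset.filter_subset _ _)
    have hKα : ∀ i, ∀ o ∈ K i, u i o = α := fun i o ho => (Finset.mem_filter.1 (hKsub i ho)).2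
    have hKdisj : ∀ i i', i ≠ i' → Disjoint (K i) (K i') :=
      fun i i' h => Finset.disjoint_of_subset_left (hKq' i)
        (Finset.disjoint_of_subset_right (hKq' i') (part_disj hq' h))
    set R : Finset O := Finset.univ \ Finset.univ.biUnion K with hR
    have hsumk : ∑ i, k i = (∑ i, ((p i).filter (fun o => u i o = α)).card) + 1 := by
      simp [hk, Finset.sum_add_distrib]
    have hsumc : (∑ i, c i) + 1 = ∑ i, ((p i).filter (fun o => u i o = β)).card := by
      have h1 : ∀ i ∈ Finset.univ, c i + (if i = j then 1 else 0)
          = ((p i).filter (fun o => u i o = β)).card := by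
        intro i _
        by_cases h : i = j
        · subst h
          simp [hc]
          omega
        · simp [hc, h]
      calc (∑ i, c i) + 1 = ∑ i, (c i + if i = j then 1 else 0) := by
            simp [Finset.sum_add_distrib]
        _ = _ := Finset.sum_congr rfl h1
    have hO' : (∑ i, ((p i).filter (fun o => u i o = α)).card)
        + (∑ i, ((p i).filter (fun o => u i o = β)).card) = Fintype.card O := by
      rw [← part_card_sum hp, ← Finset.sum_add_distrib]
      exact Finset.sum_congr rfl (fun i _ => (hcard i (p i)).symm)
    have hKbig : (Finset.univ.biUnion K).card
        = (∑ i, ((p i).filter (fun o => u i o = α)).card) + 1 := by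
      rw [Finset.card_biUnion (fun i _ i' _ h => hKdisj i i' h), ← hsumk]
      exact Finset.sum_congr rfl (fun i _ => hKcard i)
    have hRcard : ∑ i, c i = R.card := by
      rw [hR, Finset.card_sdiff_of_subset (Finset.subset_univ _), Finset.card_univ]
      omega
    obtain ⟨P, hPR, -, hPuniq, hPcard⟩ := exists_distribution Finset.univ c R hRcard
    have hKPdisj : ∀ i, Disjoint (K i) (P i) := by
      intro i
      refine Finset.disjoint_left.2 (fun o hK hP => ?_)
      exact (Finset.mem_sdiff.1 (hPR i hP)).2
        (Finset.mem_biUnion.2 ⟨i, Finset.mem_univ i, hK⟩)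
    have hql : ∀ i, α * (k i : ℝ) + β * (c i : ℝ) ≤ ∑ o ∈ K i ∪ P i, u i o := by
      intro i
      rw [Finset.sum_union (hKPdisj i)]
      have h1 : ∑ o ∈ K i, u i o = α * (k i : ℝ) := by
        rw [Finset.sum_congr rfl (hKα i), Finset.sum_const, hKcard i, nsmul_eq_mul, mul_comm]
      have h2 := Finset.card_nsmul_le_sum (P i) (fun o => u i o) β
        (fun o _ => (hbi i o).elim (fun h => le_of_le_of_eq hαβ.le h.symm)
          (fun h => le_of_eq h.symm))
      rw [hPcard i (Finset.mem_univ i), nsmul_eq_mul] at h2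
      linarith
    refine ⟨fun i => K i ∪ P i, ?_, ?_, ⟨j, ?_⟩⟩
    · intro o
      by_cases ho : o ∈ Finset.univ.biUnion K
      · obtain ⟨i, -, hi⟩ := Finset.mem_biUnion.1 ho
        refine ⟨i, Finset.mem_union_left _ hi, ?_⟩
        intro i' hi'
        rcases Finset.mem_union.1 hi' with h | h
        · by_contra hne
          exact (Finset.disjoint_left.1 (hKdisj i' i hne) h) hi
        · exact absurd ho (Finset.mem_sdiff.1 (hPR i' h)).2
      · have hoR : o ∈ R := Finset.mem_sdiff.2 ⟨Finset.mem_univ o, ho⟩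
        obtain ⟨i, hi, hu⟩ := hPuniq o hoR
        refine ⟨i, Finset.mem_union_right _ hi, ?_⟩
        intro i' hi'
        rcases Finset.mem_union.1 hi' with h | h
        · exact absurd (Finset.mem_biUnion.2 ⟨i', Finset.mem_univ i', h⟩) ho
        · exact hu i' h
    · intro i
      refine le_trans ?_ (hql i)
      rw [hsum i (p i)]
      by_cases h : i = j
      · subst h
        have hc1 : (c i : ℝ) = (((p i).filter (fun o => u i o = β)).card : ℝ) - 1 := by
          rw [hc]
          simp only [if_pos rfl]
          push_cast [Nat.cast_sub hbj]
          ring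
        have hk1 : (k i : ℝ) = (((p i).filter (fun o => u i o = α)).card : ℝ) + 1 := by
          rw [hk]
          simp only [if_pos rfl]
          push_cast
          ring
        rw [hc1, hk1]
        nlinarith
      · have hki : k i = ((p i).filter (fun o => u i o = α)).card := by simp [hk, h]
        have hci : c i = ((p i).filter (fun o => u i o = β)).card := by simp [hc, h]
        rw [hki, hci]
    · refine lt_of_lt_of_le ?_ (hql j)
      rw [hsum j (p j)]
      have hc1 : (c j : ℝ) = (((p j).filter (fun o => u j o = β)).card : ℝ) - 1 := by
        rw [hc]
        simp only [if_pos rfl]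
        push_cast [Nat.cast_sub hbj]
        ring
      have hk1 : (k j : ℝ) = (((p j).filter (fun o => u j o = α)).card : ℝ) + 1 := by
        rw [hk]
        simp only [if_pos rfl]
        push_cast
        ring
      rw [hc1, hk1]
      nlinarith
end

section
/- For bundles of objects, an agent weakly prefers q(i) to p(i) in the responsive set extension (there exists an injection f : p(i) → q(i) with f(o) ≿_i o for all o ∈ p(i)) if and only if q(i) stochastically dominates p(i) (for every threshold object level, q(i) contains at least as many objects at least that good as p(i)). -/
open Finset
open scoped Classical

/-- Every nonempty finite set has a minimal element under a total transitive relation. -/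
lemma exists_bot_of_total_trans {O : Type*} [DecidableEq O] (r : O → O → Prop)
    (htot : ∀ a b, r a b ∨ r b a)
    (htrans : ∀ a b c, r a b → r b c → r a c) :
    ∀ S : Finset O, S.Nonempty → ∃ m ∈ S, ∀ s ∈ S, r s m := by
  intro S
  induction S using Finset.induction_on with
  | empty => intro h; exact absurd rfl h.ne_empty
  | @insert a S _ ih =>
    intro _
    rcases S.eq_empty_or_nonempty with h | h
    · subst h
      refine ⟨a, by simp, ?_⟩
      intro s hs
      simp only [Finset.mem_insert, Finset.notMem_empty, or_false] at hs
      subst hs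
      exact (htot _ _).elim id id
    · obtain ⟨m, hm, hmin⟩ := ih h
      rcases htot a m with hh | hh
      · refine ⟨m, by simp [hm], ?_⟩
        intro s hs
        rcases Finset.mem_insert.mp hs with rfl | hs
        · exact hh
        · exact hmin s hs
      · refine ⟨a, by simp, ?_⟩
        intro s hs
        rcases Finset.mem_insert.mp hs with rfl | hs
        · rcases htot s s with h' | h' <;> exact h'
        · exact htrans s m a (hmin s hs) hh

/-- Responsive set extension dominance coincides with stochastic dominance for
bundles of objects, for a complete transitive (reflexive) preference `r`
(`r a b` means `a ≿ b`). -/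
theorem responsive_iff_stochastic_dominance
    {O : Type*} [Fintype O] [DecidableEq O]
    (r : O → O → Prop)
    (htot : ∀ a b, r a b ∨ r b a)
    (htrans : ∀ a b c, r a b → r b c → r a c)
    (P Q : Finset O) :
    (∃ f : O → O, Set.InjOn f ↑P ∧ ∀ o ∈ P, f o ∈ Q ∧ r (f o) o) ↔
      (∀ o : O, (P.filter (fun x => r x o)).card ≤ (Q.filter (fun x => r x o)).card) := by
  constructor
  · rintro ⟨f, hinj, hf⟩ o
    apply Finset.card_le_card_of_injOn f
    · intro x hx
      simp only [Finset.mem_coe, Finset.mem_filter] at hx ⊢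
      obtain ⟨hfQ, hfr⟩ := hf x hx.1
      exact ⟨hfQ, htrans _ _ _ hfr hx.2⟩
    · intro x hx y hy hxy
      exact hinj (Finset.mem_coe.mpr (Finset.mem_filter.mp hx).1)
        (Finset.mem_coe.mpr (Finset.mem_filter.mp hy).1) hxy
  · intro hsd
    -- Hall's theorem on the subtype of P
    set t : {x // x ∈ P} → Finset O := fun x => Q.filter (fun y => r y x) with ht
    have hall : ∀ s : Finset {x // x ∈ P}, s.card ≤ (s.biUnion t).card := by
      intro s
      rcases s.eq_empty_or_nonempty with rfl | hs
      · simp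
      · obtain ⟨m, hm, hmin⟩ := exists_bot_of_total_trans r htot htrans
          (s.image (fun x : {x // x ∈ P} => (x : O))) (hs.image _)
      -- m is a worst element of s
        obtain ⟨m₀, hm₀s, hm₀⟩ := Finset.mem_image.mp hm
        have h1 : s.card = (s.image (fun x : {x // x ∈ P} => (x : O))).card := by
          rw [Finset.card_image_of_injective _ Subtype.val_injective]
        have h2 : (s.image (fun x : {x // x ∈ P} => (x : O))) ⊆ P.filter (fun x => r x m) := by
          intro x hx
          obtain ⟨x₀, hx₀s, rfl⟩ := Finset.mem_image.mp hx
          exact Finset.mem_filter.mpr ⟨x₀.2, hmin _ hx⟩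
        have h3 : t m₀ ⊆ s.biUnion t := fun y hy =>
          Finset.mem_biUnion.mpr ⟨m₀, hm₀s, hy⟩
        calc s.card = (s.image (fun x : {x // x ∈ P} => (x : O))).card := h1
          _ ≤ (P.filter (fun x => r x m)).card := Finset.card_le_card h2
          _ ≤ (Q.filter (fun x => r x m)).card := hsd m
          _ = (t m₀).card := by rw [ht]; simp [hm₀]
          _ ≤ (s.biUnion t).card := Finset.card_le_card h3
    obtain ⟨f, hfinj, hft⟩ :=
      (Finset.all_card_le_biUnion_card_iff_existsInjective' t).mp hall
    refine ⟨fun o => if h : o ∈ P then f ⟨o, h⟩ else o, ?_, ?_⟩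
    · intro x hx y hy hxy
      simp only [Finset.mem_coe] at hx hy
      simp only [dif_pos hx, dif_pos hy] at hxy
      exact Subtype.ext_iff.mp (hfinj hxy)
    · intro o ho
      simp only [dif_pos ho]
      have := hft ⟨o, ho⟩
      rw [ht] at this
      simpa using this
end

section
/- If an assignment p admits a one-for-two Pareto improvement swap, then p is not necessarily Pareto optimal: there exist additive utilities consistent with the agents' ordinal preferences under which p is Pareto dominated. -/
open Finset

/-- `u` is an additive utility profile consistent with the ordinal preferences `r`
(`r i a b` means agent `i` weakly prefers object `a` to object `b`). -/
def Consistent {N O : Type*} (r : N → O → O → Prop) (u : N → O → ℝ) : Prop :=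
  (∀ i o o', r i o o' ↔ u i o' ≤ u i o) ∧ ∀ i o, 0 < u i o

/-- `p` is necessarily Pareto optimal. -/
def NecPO {N O : Type*} [Fintype N] (r : N → O → O → Prop) (p : N → Finset O) : Prop :=
  ∀ u : N → O → ℝ, Consistent r u → ParetoOptimal u p

/-- `p` is possibly Pareto optimal. -/
def PossPO {N O : Type*} [Fintype N] (r : N → O → O → Prop) (p : N → Finset O) : Prop :=
  ∃ u : N → O → ℝ, Consistent r u ∧ ParetoOptimal u p

/-- `p` admits a one-for-two Pareto improvement swap. -/
def HasSwap {N O : Type*} (r : N → O → O → Prop) (p : N → Finset O) : Prop :=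
  ∃ (i j : N) (o₁ o₂ oₖ : O), i ≠ j ∧ o₁ ≠ o₂ ∧ o₁ ∈ p i ∧ o₂ ∈ p i ∧ oₖ ∈ p j ∧
    (r i oₖ o₁ ∧ ¬ r i o₁ oₖ) ∧ r i o₁ o₂

/-- If p admits a one-for-two Pareto improvement swap, then p is not necessarily
Pareto optimal: some consistent utilities make p Pareto dominated. -/
theorem swap_implies_not_necessarily_pareto_optimal
    {N O : Type*} [Fintype N] [Fintype O]
    (r : N → O → O → Prop)
    (htot : ∀ i a b, r i a b ∨ r i b a)
    (htrans : ∀ i a b c, r i a b → r i b c → r i a c)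
    (p : N → Finset O) (hp : IsPartition p)
    (hswap : HasSwap r p) :
    ∃ u : N → O → ℝ, Consistent r u ∧
      ∃ q : N → Finset O, IsPartition q ∧ Dominates u q p := by
  classical
  obtain ⟨i, j, o₁, o₂, oₖ, hij, h12, h1p, h2p, hkp, ⟨hk1, hn1k⟩, h12r⟩ := hswap
  have hpu : ∀ o a b, o ∈ p a → o ∈ p b → a = b :=
    fun o a b ha hb => ExistsUnique.unique (hp o) ha hb
  have hknpi : oₖ ∉ p i := fun h => hij (hpu _ _ _ h hkp)
  have h1npj : o₁ ∉ p j := fun h => hij (hpu _ _ _ h1p h)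
  have h2npj : o₂ ∉ p j := fun h => hij (hpu _ _ _ h2p h)
  have hk1' : oₖ ≠ o₁ := fun h => hknpi (h ▸ h1p)
  have hk2' : oₖ ≠ o₂ := fun h => hknpi (h ▸ h2p)
  have hji : j ≠ i := fun h => hij h.symm
  set n := Fintype.card O with hn
  set rank : N → O → ℕ := fun a o => (univ.filter fun o' => ¬ r a o' o).card with hrank
  have hrefl : ∀ a o, r a o o := fun a o => (htot a o o).elim id id
  have hle : ∀ a o o', r a o o' → rank a o' ≤ rank a o := by
    intro a o o' h
    apply Finset.card_le_card
    intro x hx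
    simp only [Finset.mem_filter, Finset.mem_univ, true_and] at hx ⊢
    exact fun hxo => hx (htrans a x o o' hxo h)
  have hlt : ∀ a o o', r a o o' → ¬ r a o' o → rank a o' < rank a o := by
    intro a o o' h h'
    apply Finset.card_lt_card
    constructor
    · intro x hx
      simp only [Finset.mem_filter, Finset.mem_univ, true_and] at hx ⊢
      exact fun hxo => hx (htrans a x o o' hxo h)
    · intro hsub
      have := hsub (by simp [h'] : o' ∈ univ.filter fun x => ¬ r a x o)
      simp [hrefl a o'] at this
  have hiff : ∀ a o o', r a o o' ↔ rank a o' ≤ rank a o := by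
    intro a o o'
    constructor
    · exact hle a o o'
    · intro h
      by_contra hno
      have := hlt a o' o ((htot a o o').resolve_left hno) hno
      omega
  have hrank_le_n : ∀ a o, rank a o ≤ n := by
    intro a o
    have := Finset.card_le_card (Finset.filter_subset (fun o' => ¬ r a o' o) univ)
    simpa [hn] using this
  set u : N → O → ℝ :=
    fun a o => if a = i then (3:ℝ)^(rank a o) else 1 + (rank a o : ℝ)/((n:ℝ)+1) with hu
  have hupos : ∀ a o, 0 < u a o := by
    intro a o
    simp only [hu]
    split
    · positivity
    · exact add_pos_of_pos_of_nonneg one_pos (div_nonneg (Nat.cast_nonneg _) (by positivity))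
  have humono : ∀ a o o', u a o' ≤ u a o ↔ rank a o' ≤ rank a o := by
    intro a o o'
    simp only [hu]
    split
    · exact pow_le_pow_iff_right₀ (by norm_num)
    · rw [add_le_add_iff_left, div_le_div_iff_of_pos_right (by positivity), Nat.cast_le]
  -- the improved assignment
  set q : N → Finset O := fun a =>
      if a = i then insert oₖ (((p i).erase o₁).erase o₂)
      else if a = j then insert o₁ (insert o₂ ((p j).erase oₖ))
      else p a with hq
  have hqi : q i = insert oₖ (((p i).erase o₁).erase o₂) := by simp [hq]
  have hqj : q j = insert o₁ (insert o₂ ((p j).erase oₖ)) := by simp [hq, hji]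
  have hqo : ∀ a, a ≠ i → a ≠ j → q a = p a := by
    intro a h1 h2; simp [hq, h1, h2]
  have hqmem : ∀ o a, o ∈ q a ↔
      (if o = oₖ then a = i else if o = o₁ ∨ o = o₂ then a = j else o ∈ p a) := by
    intro o a
    rcases eq_or_ne o oₖ with hok | hok
    · subst hok
      rw [if_pos rfl]
      constructor
      · intro h
        by_contra hai
        by_cases haj : a = j
        · subst haj
          rw [hqj] at h
          simp only [Finset.mem_insert, Finset.mem_erase] at h
          rcases h with h | h | h
          · exact hk1' h
          · exact hk2' h
          · exact h.1 rfl
        · rw [hqo a hai haj] at h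
          exact haj (hpu _ _ _ h hkp)
      · intro h; subst h
        rw [hqi]
        exact Finset.mem_insert_self _ _
    · rw [if_neg hok]
      by_cases h12' : o = o₁ ∨ o = o₂
      · rw [if_pos h12']
        constructor
        · intro h
          by_contra haj
          by_cases hai : a = i
          · subst hai
            rw [hqi] at h
            simp only [Finset.mem_insert, Finset.mem_erase] at h
            rcases h with h | h
            · exact hok h
            · rcases h12' with h1 | h2
              · exact h.2.1 h1
              · exact h.1 h2
          · rw [hqo a hai haj] at h
            rcases h12' with h1 | h2
            · subst h1; exact hai (hpu _ _ _ h h1p)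
            · subst h2; exact hai (hpu _ _ _ h h2p)
        · intro h; subst h
          rw [hqj]
          simp only [Finset.mem_insert]
          tauto
      · rw [if_neg h12']
        push_neg at h12'
        by_cases hai : a = i
        · subst hai
          rw [hqi]
          simp only [Finset.mem_insert, Finset.mem_erase]
          constructor
          · rintro (h | h)
            · exact absurd h hok
            · exact h.2.2
          · intro h; exact Or.inr ⟨h12'.2, h12'.1, h⟩
        · by_cases haj : a = j
          · subst haj
            rw [hqj]
            simp only [Finset.mem_insert, Finset.mem_erase]
            constructor
            · rintro (h | h | h)
              · exact absurd h h12'.1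
              · exact absurd h h12'.2
              · exact h.2
            · intro h; exact Or.inr (Or.inr ⟨hok, h⟩)
          · rw [hqo a hai haj]
  have hqpart : IsPartition q := by
    intro o
    rcases eq_or_ne o oₖ with hok | hok
    · refine ⟨i, (hqmem o i).2 (by rw [if_pos hok]), fun a ha => ?_⟩
      have := (hqmem o a).1 ha
      rwa [if_pos hok] at this
    · by_cases h12' : o = o₁ ∨ o = o₂
      · refine ⟨j, (hqmem o j).2 (by rw [if_neg hok, if_pos h12']), fun a ha => ?_⟩
        have := (hqmem o a).1 ha
        rwa [if_neg hok, if_pos h12'] at this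
      · obtain ⟨a, ha, hau⟩ := hp o
        refine ⟨a, (hqmem o a).2 (by rw [if_neg hok, if_neg h12']; exact ha), fun b hb => ?_⟩
        have := (hqmem o b).1 hb
        rw [if_neg hok, if_neg h12'] at this
        exact hau b this
  have hsum_i : ∑ o ∈ q i, u i o = ∑ o ∈ p i, u i o - u i o₁ - u i o₂ + u i oₖ := by
    rw [hqi, Finset.sum_insert (by simp [hknpi]),
      Finset.sum_erase_eq_sub (Finset.mem_erase.2 ⟨Ne.symm h12, h2p⟩),
      Finset.sum_erase_eq_sub h1p]
    ring
  have hsum_j : ∑ o ∈ q j, u j o = ∑ o ∈ p j, u j o - u j oₖ + u j o₁ + u j o₂ := by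
    rw [hqj, Finset.sum_insert (by simp [h12, h1npj]),
      Finset.sum_insert (by simp [h2npj]),
      Finset.sum_erase_eq_sub hkp]
    ring
  have hA : u i o₁ + u i o₂ < u i oₖ := by
    have h1 : rank i o₁ < rank i oₖ := hlt i oₖ o₁ hk1 hn1k
    have h2 : rank i o₂ ≤ rank i o₁ := hle i o₁ o₂ h12r
    simp only [hu, if_pos rfl]
    have e1 : (3:ℝ)^(rank i o₂) ≤ 3^(rank i o₁) :=
      pow_le_pow_right₀ (by norm_num) h2
    have e2 : (3:ℝ)^(rank i o₁ + 1) ≤ 3^(rank i oₖ) :=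
      pow_le_pow_right₀ (by norm_num) h1
    have e3 : (3:ℝ)^(rank i o₁ + 1) = 3 * 3^(rank i o₁) := by ring
    have e4 : (0:ℝ) < 3^(rank i o₁) := by positivity
    linarith
  have hB : u j oₖ < u j o₁ + u j o₂ := by
    simp only [hu, if_neg hji]
    have hk : (rank j oₖ : ℝ) / ((n:ℝ)+1) < 1 := by
      rw [div_lt_one (by positivity)]
      have : (rank j oₖ : ℝ) ≤ n := by exact_mod_cast hrank_le_n j oₖ
      linarith
    have h1 : (0:ℝ) ≤ (rank j o₁ : ℝ)/((n:ℝ)+1) := div_nonneg (Nat.cast_nonneg _) (by positivity)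
    have h2 : (0:ℝ) ≤ (rank j o₂ : ℝ)/((n:ℝ)+1) := div_nonneg (Nat.cast_nonneg _) (by positivity)
    linarith
  refine ⟨u, ⟨fun a o o' => (hiff a o o').trans (humono a o o').symm, hupos⟩,
    q, hqpart, ?_, ⟨i, ?_⟩⟩
  · intro a
    by_cases hai : a = i
    · subst hai; rw [hsum_i]; linarith
    · by_cases haj : a = j
      · subst haj; rw [hsum_j]; linarith
      · rw [hqo a hai haj]
  · rw [hsum_i]; linarith
end

section
/- An assignment p is necessarily Pareto optimal if and only if (i) p is possibly Pareto optimal (equivalently, SD-efficient) and (ii) p admits no one-for-two Pareto improvement swap. -/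
set_option linter.unusedSectionVars false
attribute [local instance] Classical.propDecidable


open Finset

section Aux
variable {N O : Type*} [Fintype N] [Fintype O]


lemma sum_card_partition {s : N → Finset O} (hs : IsPartition s) :
    ∑ i, (s i).card = Fintype.card O := by
  classical
  have h1 : ∀ i, (s i).card = ∑ o ∈ univ, (if o ∈ s i then 1 else 0) := by
    intro i
    rw [Finset.sum_ite_mem, Finset.univ_inter, Finset.card_eq_sum_ones]
  have h2 : ∀ o : O, (∑ i ∈ univ, if o ∈ s i then 1 else 0) = 1 := by
    intro o
    obtain ⟨j, hj, huniq⟩ := hs o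
    have : (univ.filter fun i => o ∈ s i) = {j} := by
      ext i
      simp only [Finset.mem_filter, Finset.mem_univ, true_and, Finset.mem_singleton]
      exact ⟨fun h => huniq i h, fun h => h ▸ hj⟩
    rw [← Finset.card_filter, this, Finset.card_singleton]

  calc ∑ i, (s i).card = ∑ i, ∑ o ∈ univ, (if o ∈ s i then 1 else 0) := by
        exact Finset.sum_congr rfl (fun i _ => h1 i)
    _ = ∑ o ∈ univ, ∑ i ∈ univ, (if o ∈ s i then 1 else 0) := Finset.sum_comm
    _ = ∑ o : O, 1 := Finset.sum_congr rfl (fun o _ => h2 o)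
    _ = Fintype.card O := by simp

end Aux

section Rank
variable {N O : Type*} [Fintype O]
variable (r : N → O → O → Prop)

/-- rank of object `o` for agent `i`: number of objects weakly below it. -/
noncomputable def crank (i : N) (o : O) : ℕ :=
  (univ.filter fun x => r i o x).card

variable {r}
variable (htot : ∀ i a b, r i a b ∨ r i b a)
    (htrans : ∀ i a b c, r i a b → r i b c → r i a c)
include htot htrans

lemma crank_mono {i : N} {o o' : O} (h : r i o o') : crank r i o' ≤ crank r i o := by
  apply Finset.card_le_card
  intro x hx
  simp only [crank, Finset.mem_filter, Finset.mem_univ, true_and] at hx ⊢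
  exact htrans i o o' x h hx

lemma crank_strict {i : N} {o o' : O} (h : ¬ r i o o') : crank r i o < crank r i o' := by
  have h' : r i o' o := (htot i o o').resolve_left h
  apply Finset.card_lt_card
  constructor
  · intro x hx
    simp only [crank, Finset.mem_filter, Finset.mem_univ, true_and] at hx ⊢
    exact htrans i o' o x h' hx
  · intro hsub
    have ho' : o' ∈ univ.filter fun x => r i o' x := by
      simp only [Finset.mem_filter, Finset.mem_univ, true_and]
      exact (htot i o' o').elim id id
    have := hsub ho'
    simp only [Finset.mem_filter, Finset.mem_univ, true_and] at this
    exact h this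

lemma crank_iff {i : N} {o o' : O} : r i o o' ↔ crank r i o' ≤ crank r i o := by
  constructor
  · exact crank_mono htot htrans
  · intro hle
    by_contra hn
    exact absurd hle (not_le.mpr (crank_strict htot htrans hn))

lemma crank_pos (i : N) (o : O) : 1 ≤ crank r i o := by
  have : o ∈ univ.filter fun x => r i o x := by
    simp only [Finset.mem_filter, Finset.mem_univ, true_and]
    exact (htot i o o).elim id id
  exact Finset.card_pos.mpr ⟨o, this⟩ 

lemma crank_le (i : N) (o : O) : crank r i o ≤ Fintype.card O :=
  Finset.card_filter_le _ _

end Rank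


section CE
variable {N O : Type*} [Fintype O] {r : N → O → O → Prop}
variable (htot : ∀ i a b, r i a b ∨ r i b a)
    (htrans : ∀ i a b c, r i a b → r i b c → r i a c)
include htot htrans

lemma consistent_exists : Consistent r (fun i o => (crank r i o : ℝ)) := by
  refine ⟨fun i o o' => ?_, fun i o => ?_⟩
  · rw [crank_iff htot htrans, Nat.cast_le]
  · have := crank_pos htot htrans i o
    simp only []
    exact_mod_cast Nat.lt_of_lt_of_le Nat.zero_lt_one this
end CE




section Swap
variable {N O : Type*} [Fintype N] [Fintype O] {r : N → O → O → Prop}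
variable (htot : ∀ i a b, r i a b ∨ r i b a)
    (htrans : ∀ i a b c, r i a b → r i b c → r i a c)
include htot htrans

lemma swap_not_nec {p : N → Finset O} (hp : IsPartition p) (hsw : HasSwap r p) :
    ∃ u : N → O → ℝ, Consistent r u ∧ ¬ ParetoOptimal u p := by
  classical
  obtain ⟨i, j, o₁, o₂, ok, hij, h12, h1p, h2p, hkp, ⟨hk1, hk1'⟩, h12r⟩ := hsw
  set n := Fintype.card O with hn
  set u : N → O → ℝ := fun a o => if a = i then (3:ℝ) ^ (crank r a o) else (n : ℝ) + crank r a o with hu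
  have h3 : (1:ℝ) < 3 := by norm_num
  have hcons : Consistent r u := by
    constructor
    · intro a o o'
      rw [crank_iff htot htrans (i := a) (o := o) (o' := o')]
      by_cases ha : a = i
      · simp only [hu, if_pos ha]
        exact (pow_le_pow_iff_right₀ h3).symm
      · simp only [hu, if_neg ha]
        constructor
        · intro h; exact add_le_add_right (by exact_mod_cast h) _
        · intro h; exact_mod_cast le_of_add_le_add_left h
    · intro a o
      have h1 : 1 ≤ crank r a o := crank_pos htot htrans a o
      by_cases ha : a = i
      · simp only [hu, if_pos ha]
        positivity
      · simp only [hu, if_neg ha]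
        have : (1:ℝ) ≤ (crank r a o : ℝ) := by exact_mod_cast h1
        have hn0 : (0:ℝ) ≤ (n:ℝ) := by positivity
        linarith
  have howner : ∀ o a b, o ∈ p a → o ∈ p b → a = b := by
    intro o a b ha hb
    obtain ⟨w, hw, hw'⟩ := hp o
    exact (hw' a ha).trans (hw' b hb).symm
  have hk1ne : ok ≠ o₁ := fun h => hij (howner ok i j (h ▸ h1p) hkp)
  have hk2ne : ok ≠ o₂ := fun h => hij (howner ok i j (h ▸ h2p) hkp)
  have hknp : ok ∉ p i := fun h => hij (howner ok i j h hkp)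
  have h1np : o₁ ∉ p j := fun h => hij (howner o₁ i j h1p h)
  have h2np : o₂ ∉ p j := fun h => hij (howner o₂ i j h2p h)
  set qq : N → Finset O := fun a =>
    if a = i then ((p i).erase o₁).erase o₂ ∪ {ok}
    else if a = j then (p j).erase ok ∪ ({o₁, o₂} : Finset O)
    else p a with hqq
  have hqqi : qq i = ((p i).erase o₁).erase o₂ ∪ {ok} := by
    simp [hqq]
  have hqqj : qq j = (p j).erase ok ∪ ({o₁, o₂} : Finset O) := by
    simp [hqq, Ne.symm hij]
  have hqqo : ∀ a, a ≠ i → a ≠ j → qq a = p a := by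
    intro a hai haj
    simp [hqq, hai, haj]
  have hmemi : ∀ o, o ∈ qq i ↔ (o ∈ p i ∧ o ≠ o₁ ∧ o ≠ o₂) ∨ o = ok := by
    intro o
    rw [hqqi]
    simp only [Finset.mem_union, Finset.mem_erase, Finset.mem_singleton]
    tauto
  have hmemj : ∀ o, o ∈ qq j ↔ (o ∈ p j ∧ o ≠ ok) ∨ o = o₁ ∨ o = o₂ := by
    intro o
    rw [hqqj]
    simp only [Finset.mem_union, Finset.mem_erase, Finset.mem_insert, Finset.mem_singleton]
    tauto
  have hqpart : IsPartition qq := by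
    intro o
    by_cases ho : ok = o
    · subst ho
      refine ⟨i, (hmemi ok).mpr (Or.inr rfl), ?_⟩
      intro a ha
      by_cases hai : a = i
      · exact hai
      by_cases haj : a = j
      · subst haj
        rcases (hmemj ok).mp ha with ⟨_, h⟩ | h | h
        · exact absurd rfl h
        · exact absurd h hk1ne
        · exact absurd h hk2ne
      · rw [hqqo a hai haj] at ha
        exact absurd (howner ok a j ha hkp) haj
    by_cases ho1 : o₁ = o
    · subst ho1
      refine ⟨j, (hmemj o₁).mpr (Or.inr (Or.inl rfl)), ?_⟩
      intro a ha
      by_cases hai : a = i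
      · subst hai
        rcases (hmemi o₁).mp ha with ⟨_, h, _⟩ | h
        · exact absurd rfl h
        · exact absurd h.symm hk1ne
      by_cases haj : a = j
      · exact haj
      · rw [hqqo a hai haj] at ha
        exact absurd (howner o₁ a i ha h1p) hai
    by_cases ho2 : o₂ = o
    · subst ho2
      refine ⟨j, (hmemj o₂).mpr (Or.inr (Or.inr rfl)), ?_⟩
      intro a ha
      by_cases hai : a = i
      · subst hai
        rcases (hmemi o₂).mp ha with ⟨_, _, h⟩ | h
        · exact absurd rfl h
        · exact absurd h.symm hk2ne
      by_cases haj : a = j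
      · exact haj
      · rw [hqqo a hai haj] at ha
        exact absurd (howner o₂ a i ha h2p) hai
    · obtain ⟨w, hw, hw'⟩ := hp o
      have hone : o ≠ ok := fun h => ho h.symm
      have hone1 : o ≠ o₁ := fun h => ho1 h.symm
      have hone2 : o ≠ o₂ := fun h => ho2 h.symm
      have hwmem : o ∈ qq w := by
        by_cases hwi : w = i
        · subst hwi; exact (hmemi o).mpr (Or.inl ⟨hw, hone1, hone2⟩)
        by_cases hwj : w = j
        · subst hwj; exact (hmemj o).mpr (Or.inl ⟨hw, hone⟩)
        · rw [hqqo w hwi hwj]; exact hw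
      refine ⟨w, hwmem, ?_⟩
      intro a ha
      by_cases hai : a = i
      · rw [hai] at ha
        rcases (hmemi o).mp ha with ⟨h, _, _⟩ | h
        · exact hai.trans (hw' i h)
        · exact absurd h hone
      by_cases haj : a = j
      · rw [haj] at ha
        rcases (hmemj o).mp ha with ⟨h, _⟩ | h | h
        · exact haj.trans (hw' j h)
        · exact absurd h hone1
        · exact absurd h hone2
      · rw [hqqo a hai haj] at ha
        exact hw' a ha
  have hsumi : ∑ o ∈ qq i, u i o = (∑ o ∈ p i, u i o) - u i o₁ - u i o₂ + u i ok := by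
    have hdisj : Disjoint (((p i).erase o₁).erase o₂) ({ok} : Finset O) := by
      simp only [Finset.disjoint_singleton_right, Finset.mem_erase]
      intro h
      exact hknp h.2.2
    have h2mem : o₂ ∈ (p i).erase o₁ := Finset.mem_erase.mpr ⟨fun h => h12 h.symm, h2p⟩
    have a1 := Finset.sum_erase_add (p i) (u i) h1p
    have a2 := Finset.sum_erase_add ((p i).erase o₁) (u i) h2mem
    rw [hqqi, Finset.sum_union hdisj, Finset.sum_singleton]
    linarith
  have hsumj : ∑ o ∈ qq j, u j o = (∑ o ∈ p j, u j o) - u j ok + u j o₁ + u j o₂ := by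
    have hdisj : Disjoint ((p j).erase ok) ({o₁, o₂} : Finset O) := by
      simp only [Finset.disjoint_insert_right, Finset.disjoint_singleton_right, Finset.mem_erase]
      exact ⟨fun h => h1np h.2, fun h => h2np h.2⟩
    have a1 := Finset.sum_erase_add (p j) (u j) hkp
    rw [hqqj, Finset.sum_union hdisj, Finset.sum_pair h12]
    linarith
  have hgain_i : u i o₁ + u i o₂ < u i ok := by
    have hc1 : crank r i o₁ < crank r i ok := crank_strict htot htrans hk1'
    have hc2 : crank r i o₂ ≤ crank r i o₁ := crank_mono htot htrans h12r
    simp only [hu, if_pos rfl]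
    have b1 : (3:ℝ) ^ (crank r i o₁ + 1) ≤ (3:ℝ) ^ (crank r i ok) :=
      pow_le_pow_right₀ (by norm_num) hc1
    have b2 : (3:ℝ) ^ (crank r i o₂) ≤ (3:ℝ) ^ (crank r i o₁) :=
      pow_le_pow_right₀ (by norm_num) hc2
    have b3 : (3:ℝ) ^ (crank r i o₁ + 1) = 3 * (3:ℝ) ^ (crank r i o₁) := by ring
    have b4 : (0:ℝ) < (3:ℝ) ^ (crank r i o₂) := by positivity
    nlinarith
  have hgain_j : u j ok < u j o₁ + u j o₂ := by
    have hc1 : 1 ≤ crank r j o₁ := crank_pos htot htrans j o₁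
    have hc2 : 1 ≤ crank r j o₂ := crank_pos htot htrans j o₂
    have hck : crank r j ok ≤ n := crank_le htot htrans j ok
    simp only [hu, if_neg (Ne.symm hij)]
    have c1 : (1:ℝ) ≤ (crank r j o₁ : ℝ) := by exact_mod_cast hc1
    have c2 : (1:ℝ) ≤ (crank r j o₂ : ℝ) := by exact_mod_cast hc2
    have ck : (crank r j ok : ℝ) ≤ (n:ℝ) := by exact_mod_cast hck
    have hn1 : (1:ℝ) ≤ (n:ℝ) := by
      have h1n : 1 ≤ n := le_trans (crank_pos htot htrans j ok) (crank_le htot htrans j ok)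
      exact_mod_cast h1n
    linarith
  refine ⟨u, hcons, ?_⟩
  intro hPO
  apply hPO
  refine ⟨qq, hqpart, ?_, i, ?_⟩
  · intro a
    by_cases hai : a = i
    · subst hai; rw [hsumi]; linarith
    by_cases haj : a = j
    · subst haj; rw [hsumj]; linarith
    · rw [hqqo a hai haj]
  · rw [hsumi]; linarith
end Swap

section Hard
variable {N O : Type*} [Fintype N] [Fintype O] {r : N → O → O → Prop}

/-- outside objects are dispreferred to every non-minimum object of one's bundle -/
lemma outside_le {p : N → Finset O} (hp : IsPartition p) (hnosw : ¬ HasSwap r p)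
    {u' : N → O → ℝ} (hu' : Consistent r u')
    {h : N} {m : O} (hm : m ∈ p h) (hmin : ∀ x ∈ p h, u' h m ≤ u' h x)
    {a : O} (ha : a ∈ p h) (hne : a ≠ m) {c : O} (hc : c ∉ p h) :
    u' h c ≤ u' h a := by
  obtain ⟨j, hj, hj'⟩ := hp c
  have hhj : h ≠ j := fun e => hc (e ▸ hj)
  by_contra hlt
  push_neg at hlt
  exact hnosw ⟨h, j, a, m, c, hhj, hne, ha, hm, hj,
    ⟨(hu'.1 h c a).mpr hlt.le, fun hr => absurd ((hu'.1 h a c).mp hr) (not_le.mpr hlt)⟩,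
    (hu'.1 h a m).mpr (hmin a ha)⟩

lemma card_le_of_dom {p : N → Finset O} (hp : IsPartition p) (hnosw : ¬ HasSwap r p)
    {u' : N → O → ℝ} (hu' : Consistent r u')
    {q : N → Finset O} {h : N}
    (hwk : ∑ o ∈ p h, u' h o ≤ ∑ o ∈ q h, u' h o) :
    (p h).card ≤ (q h).card := by
  classical
  by_contra hlt
  push_neg at hlt
  have hpne : (p h).Nonempty := Finset.card_pos.mp (lt_of_le_of_lt (Nat.zero_le _) hlt)
  obtain ⟨m, hm, hmin⟩ := Finset.exists_min_image (p h) (u' h) hpne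
  by_cases hone : (p h).card ≤ 1
  · have hsing : p h = {m} := by
      apply Finset.eq_singleton_iff_unique_mem.mpr
      exact ⟨hm, fun x hx => Finset.card_le_one.mp hone x hx m hm⟩
    have hq0 : q h = ∅ := by
      have : (q h).card = 0 := by
        have h1 : (p h).card ≤ 1 := hone
        omega
      exact Finset.card_eq_zero.mp this
    rw [hsing, hq0] at hwk
    simp only [Finset.sum_singleton, Finset.sum_empty] at hwk
    exact absurd hwk (not_le.mpr (hu'.2 h m))
  · push_neg at hone
    have hemne : ((p h).erase m).Nonempty := by
      rw [← Finset.card_pos, Finset.card_erase_of_mem hm]; omega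
    obtain ⟨a0, ha0, hν⟩ := Finset.exists_min_image ((p h).erase m) (u' h) hemne
    set ν := u' h a0 with hνdef
    have hνpos : 0 < ν := hu'.2 h a0
    have hCν : ∀ c ∈ q h \ p h, u' h c ≤ ν := by
      intro c hc
      exact outside_le hp hnosw hu' hm hmin (Finset.mem_of_mem_erase ha0)
        (Finset.ne_of_mem_erase ha0) (Finset.mem_sdiff.mp hc).2
    have S1 : (∑ o ∈ q h ∩ p h, u' h o) + (∑ o ∈ q h \ p h, u' h o) = ∑ o ∈ q h, u' h o :=
      Finset.sum_inter_add_sum_sdiff _ _ _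
    have S2 : (∑ o ∈ p h ∩ q h, u' h o) + (∑ o ∈ p h \ q h, u' h o) = ∑ o ∈ p h, u' h o :=
      Finset.sum_inter_add_sum_sdiff _ _ _
    have hic : q h ∩ p h = p h ∩ q h := Finset.inter_comm _ _
    have hcards : (q h \ p h).card + 1 ≤ (p h \ q h).card := by
      have c1 := Finset.card_sdiff_add_card_inter (q h) (p h)
      have c2 := Finset.card_sdiff_add_card_inter (p h) (q h)
      have c3 : (q h ∩ p h).card = (p h ∩ q h).card := by rw [hic]
      omega
    have S3 : (∑ o ∈ q h \ p h, u' h o) ≤ ((q h \ p h).card : ℝ) * ν := by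
      have := Finset.sum_le_card_nsmul (q h \ p h) (u' h) ν hCν
      rwa [nsmul_eq_mul] at this
    have S4 : ((q h \ p h).card : ℝ) * ν < ∑ o ∈ p h \ q h, u' h o := by
      by_cases hmD : m ∈ p h \ q h
      · have e1 : (∑ o ∈ (p h \ q h).erase m, u' h o) + u' h m = ∑ o ∈ p h \ q h, u' h o :=
          Finset.sum_erase_add _ _ hmD
        have e2 : (((p h \ q h).erase m).card : ℝ) * ν ≤ ∑ o ∈ (p h \ q h).erase m, u' h o := by
          have := Finset.card_nsmul_le_sum ((p h \ q h).erase m) (u' h) ν ?_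
          · rwa [nsmul_eq_mul] at this
          · intro x hx
            have hxp : x ∈ (p h).erase m := by
              rcases Finset.mem_erase.mp hx with ⟨hxm, hxD⟩
              exact Finset.mem_erase.mpr ⟨hxm, (Finset.mem_sdiff.mp hxD).1⟩
            exact hν x hxp
        have e3 : ((q h \ p h).card : ℝ) ≤ (((p h \ q h).erase m).card : ℝ) := by
          rw [Finset.card_erase_of_mem hmD]
          have := hcards
          have h1 : (q h \ p h).card ≤ (p h \ q h).card - 1 := by omega
          exact_mod_cast h1
        have hm0 : 0 < u' h m := hu'.2 h m
        nlinarith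
      · have hsub : p h \ q h ⊆ (p h).erase m := by
          intro x hx
          rcases Finset.mem_sdiff.mp hx with ⟨hxp, hxq⟩
          refine Finset.mem_erase.mpr ⟨?_, hxp⟩
          rintro rfl
          exact hmD (Finset.mem_sdiff.mpr ⟨hm, hxq⟩)
        have e2 : (((p h \ q h)).card : ℝ) * ν ≤ ∑ o ∈ p h \ q h, u' h o := by
          have := Finset.card_nsmul_le_sum (p h \ q h) (u' h) ν (fun x hx => hν x (hsub hx))
          rwa [nsmul_eq_mul] at this
        have e3 : ((q h \ p h).card : ℝ) + 1 ≤ ((p h \ q h).card : ℝ) := by exact_mod_cast hcards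
        nlinarith
    have hicsum : (∑ o ∈ q h ∩ p h, u' h o) = ∑ o ∈ p h ∩ q h, u' h o := by rw [hic]
    linarith

lemma min_out_le {p : N → Finset O} (hp : IsPartition p) (hnosw : ¬ HasSwap r p)
    {u' : N → O → ℝ} (hu' : Consistent r u')
    {q : N → Finset O} {h : N}
    (hwk : ∑ o ∈ p h, u' h o ≤ ∑ o ∈ q h, u' h o)
    (hcards : (q h).card = (p h).card)
    (hne : (q h \ p h).Nonempty) :
    ∃ d, d ∈ p h \ q h ∧ ∀ c ∈ q h \ p h, u' h d ≤ u' h c := by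
  classical
  have hCD : (q h \ p h).card = (p h \ q h).card := by
    have c1 := Finset.card_sdiff_add_card_inter (q h) (p h)
    have c2 := Finset.card_sdiff_add_card_inter (p h) (q h)
    have c3 : (q h ∩ p h).card = (p h ∩ q h).card := by rw [Finset.inter_comm]
    omega
  have hDne : (p h \ q h).Nonempty := by
    rw [← Finset.card_pos, ← hCD, Finset.card_pos]; exact hne
  obtain ⟨d, hd, hdmin⟩ := Finset.exists_min_image (p h \ q h) (u' h) hDne
  refine ⟨d, hd, ?_⟩
  by_contra hcon
  push_neg at hcon
  obtain ⟨c₀, hc₀, hc₀lt⟩ := hcon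
  have hpne : (p h).Nonempty := ⟨d, (Finset.mem_sdiff.mp hd).1⟩
  obtain ⟨m, hm, hmin⟩ := Finset.exists_min_image (p h) (u' h) hpne
  -- we will show ∑ q < ∑ p
  have hkey : (∑ o ∈ q h \ p h, u' h o) < ∑ o ∈ p h \ q h, u' h o := by
    by_cases hone : (p h).card ≤ 1
    · -- p h = {m}, D = {m}, C = {c₀}
      have hsing : p h = {m} :=
        Finset.eq_singleton_iff_unique_mem.mpr ⟨hm, fun x hx => Finset.card_le_one.mp hone x hx m hm⟩
      have hDsub : p h \ q h ⊆ {m} := hsing ▸ Finset.sdiff_subset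
      have hDm : p h \ q h = {m} :=
        Finset.Nonempty.subset_singleton_iff hDne |>.mp hDsub
      have hCone : (q h \ p h).card ≤ 1 := by rw [hCD, hDm]; simp
      have hCc : q h \ p h = {c₀} :=
        Finset.eq_singleton_iff_unique_mem.mpr ⟨hc₀, fun x hx => Finset.card_le_one.mp hCone x hx c₀ hc₀⟩
      have hdm : d = m := by
        have := hDm ▸ hd
        exact Finset.mem_singleton.mp this
      rw [hCc, hDm, Finset.sum_singleton, Finset.sum_singleton]
      rw [hdm] at hc₀lt
      exact hc₀lt
    · push_neg at hone
      have hemne : ((p h).erase m).Nonempty := by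
        rw [← Finset.card_pos, Finset.card_erase_of_mem hm]; omega
      obtain ⟨a0, ha0, hν⟩ := Finset.exists_min_image ((p h).erase m) (u' h) hemne
      set ν := u' h a0 with hνdef
      have hCν : ∀ c ∈ q h \ p h, u' h c ≤ ν := fun c hc =>
        outside_le hp hnosw hu' hm hmin (Finset.mem_of_mem_erase ha0)
          (Finset.ne_of_mem_erase ha0) (Finset.mem_sdiff.mp hc).2
      have hCerase : ∀ c ∈ (q h \ p h).erase c₀, u' h c ≤ ν := fun c hc =>
        hCν c (Finset.mem_of_mem_erase hc)
      by_cases hmD : m ∈ p h \ q h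
      · have hdm : u' h d = u' h m :=
          le_antisymm (hdmin m hmD) (hmin d (Finset.mem_sdiff.mp hd).1)
        have e1 : (∑ o ∈ (q h \ p h).erase c₀, u' h o) + u' h c₀ = ∑ o ∈ q h \ p h, u' h o :=
          Finset.sum_erase_add _ _ hc₀
        have e2 : (∑ o ∈ (p h \ q h).erase m, u' h o) + u' h m = ∑ o ∈ p h \ q h, u' h o :=
          Finset.sum_erase_add _ _ hmD
        have e3 : (∑ o ∈ (q h \ p h).erase c₀, u' h o) ≤ (((q h \ p h).erase c₀).card : ℝ) * ν := by
          have := Finset.sum_le_card_nsmul ((q h \ p h).erase c₀) (u' h) ν hCerase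
          rwa [nsmul_eq_mul] at this
        have e4 : ((((p h \ q h)).erase m).card : ℝ) * ν ≤ ∑ o ∈ (p h \ q h).erase m, u' h o := by
          have := Finset.card_nsmul_le_sum ((p h \ q h).erase m) (u' h) ν ?_
          · rwa [nsmul_eq_mul] at this
          · intro x hx
            rcases Finset.mem_erase.mp hx with ⟨hxm, hxD⟩
            exact hν x (Finset.mem_erase.mpr ⟨hxm, (Finset.mem_sdiff.mp hxD).1⟩)
        have e5 : (((q h \ p h).erase c₀).card : ℝ) = ((((p h \ q h)).erase m).card : ℝ) := by
          rw [Finset.card_erase_of_mem hc₀, Finset.card_erase_of_mem hmD, hCD]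
        rw [e5] at e3
        linarith
      · have hDsub : p h \ q h ⊆ (p h).erase m := by
          intro x hx
          rcases Finset.mem_sdiff.mp hx with ⟨hxp, hxq⟩
          refine Finset.mem_erase.mpr ⟨?_, hxp⟩
          rintro rfl
          exact hmD (Finset.mem_sdiff.mpr ⟨hm, hxq⟩)
        have hCd : ∀ c ∈ q h \ p h, u' h c ≤ u' h d := fun c hc =>
          outside_le hp hnosw hu' hm hmin (Finset.mem_sdiff.mp hd).1
            (Finset.ne_of_mem_erase (hDsub hd)) (Finset.mem_sdiff.mp hc).2
        have e1 : (∑ o ∈ (q h \ p h).erase c₀, u' h o) + u' h c₀ = ∑ o ∈ q h \ p h, u' h o :=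
          Finset.sum_erase_add _ _ hc₀
        have e3 : (∑ o ∈ (q h \ p h).erase c₀, u' h o) ≤ (((q h \ p h).erase c₀).card : ℝ) * u' h d := by
          have := Finset.sum_le_card_nsmul ((q h \ p h).erase c₀) (u' h) (u' h d)
            (fun c hc => hCd c (Finset.mem_of_mem_erase hc))
          rwa [nsmul_eq_mul] at this
        have e4 : (((p h \ q h)).card : ℝ) * u' h d ≤ ∑ o ∈ p h \ q h, u' h o := by
          have := Finset.card_nsmul_le_sum (p h \ q h) (u' h) (u' h d) hdmin
          rwa [nsmul_eq_mul] at this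
        have e5 : (((q h \ p h).erase c₀).card : ℝ) + 1 = (((p h \ q h)).card : ℝ) := by
          rw [Finset.card_erase_of_mem hc₀, hCD]
          have : 1 ≤ (p h \ q h).card := Finset.card_pos.mpr hDne
          have h2 : (p h \ q h).card - 1 + 1 = (p h \ q h).card := by omega
          exact_mod_cast h2
        have e6 : ((((q h \ p h).erase c₀).card : ℝ) + 1) * u' h d ≤ ∑ o ∈ p h \ q h, u' h o := by
          rw [e5]; exact e4
        have e7 : ((((q h \ p h).erase c₀).card : ℝ) + 1) * u' h d
            = (((q h \ p h).erase c₀).card : ℝ) * u' h d + u' h d := by ring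
        linarith
  have S1 : (∑ o ∈ q h ∩ p h, u' h o) + (∑ o ∈ q h \ p h, u' h o) = ∑ o ∈ q h, u' h o :=
    Finset.sum_inter_add_sum_sdiff _ _ _
  have S2 : (∑ o ∈ p h ∩ q h, u' h o) + (∑ o ∈ p h \ q h, u' h o) = ∑ o ∈ p h, u' h o :=
    Finset.sum_inter_add_sum_sdiff _ _ _
  have hicsum : (∑ o ∈ q h ∩ p h, u' h o) = ∑ o ∈ p h ∩ q h, u' h o := by
    rw [Finset.inter_comm]
  linarith

lemma no_improvement {p : N → Finset O} (hp : IsPartition p) (hnosw : ¬ HasSwap r p)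
    {u₀ : N → O → ℝ} (hu₀ : Consistent r u₀) (hPO₀ : ParetoOptimal u₀ p)
    {u' : N → O → ℝ} (hu' : Consistent r u') :
    ParetoOptimal u' p := by
  classical
  rintro ⟨q, hq, hdom⟩
  revert hq hdom
  suffices H : ∀ (n : ℕ) (q : N → Finset O), IsPartition q → Dominates u' q p →
      (∑ i, (q i \ p i).card) ≤ n → False by
    intro hq hdom
    exact H _ q hq hdom le_rfl
  intro n
  induction n with
  | zero =>
    intro q hq hdom hle
    obtain ⟨hwk, i0, hstrict⟩ := hdom
    have hz : ∑ i, (q i \ p i).card = 0 := Nat.le_zero.mp hle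
    have h0 : (q i0 \ p i0).card = 0 := by
      have := Finset.sum_eq_zero_iff.mp hz i0 (Finset.mem_univ _)
      exact this
    have hsub : q i0 ⊆ p i0 := by
      intro x hx
      by_contra hxp
      have : x ∈ q i0 \ p i0 := Finset.mem_sdiff.mpr ⟨hx, hxp⟩
      rw [Finset.card_eq_zero.mp h0] at this
      exact absurd this (Finset.notMem_empty x)
    have : ∑ o ∈ q i0, u' i0 o ≤ ∑ o ∈ p i0, u' i0 o :=
      Finset.sum_le_sum_of_subset_of_nonneg hsub (fun o _ _ => (hu'.2 i0 o).le)
    linarith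
  | succ n ih =>
    intro q hq hdom hle
    obtain ⟨hwk, i0, hstrict⟩ := hdom
    -- owners
    set pown : O → N := fun o => (hp o).choose with hpowndef
    set qown : O → N := fun o => (hq o).choose with hqowndef
    have hpmem : ∀ o, o ∈ p (pown o) := fun o => (hp o).choose_spec.1
    have hpeq : ∀ o a, o ∈ p a → a = pown o := fun o a ha => (hp o).choose_spec.2 a ha
    have hqmem : ∀ o, o ∈ q (qown o) := fun o => (hq o).choose_spec.1
    have hqeq : ∀ o a, o ∈ q a → a = qown o := fun o a ha => (hq o).choose_spec.2 a ha
    -- equal cards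
    have hcards : ∀ h, (q h).card = (p h).card := by
      have hge : ∀ h ∈ Finset.univ, (p h).card ≤ (q h).card :=
        fun h _ => card_le_of_dom hp hnosw hu' (hwk h)
      have hsums : (∑ h, (p h).card) = ∑ h, (q h).card := by
        rw [sum_card_partition hp, sum_card_partition hq]
      intro h
      exact ((Finset.sum_eq_sum_iff_of_le hge).mp hsums h (Finset.mem_univ h)).symm
    -- moved predicate
    have key : ∀ o : O, ∃ d, o ∉ p (qown o) →
        d ∈ p (qown o) ∧ d ∉ q (qown o) ∧ u' (qown o) d ≤ u' (qown o) o := by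
      intro o
      by_cases hmv : o ∉ p (qown o)
      · obtain ⟨d, hd, hdmin⟩ := min_out_le hp hnosw hu' (hwk (qown o)) (hcards (qown o))
          ⟨o, Finset.mem_sdiff.mpr ⟨hqmem o, hmv⟩⟩
        refine ⟨d, fun _ => ?_⟩
        rcases Finset.mem_sdiff.mp hd with ⟨hd1, hd2⟩
        exact ⟨hd1, hd2, hdmin o (Finset.mem_sdiff.mpr ⟨hqmem o, hmv⟩)⟩
      · exact ⟨o, fun h => absurd h (fun h' => h' (not_not.mp hmv))⟩
    set f : O → O := fun o => (key o).choose with hfdef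
    have hf : ∀ o, o ∉ p (qown o) →
        f o ∈ p (qown o) ∧ f o ∉ q (qown o) ∧ u' (qown o) (f o) ≤ u' (qown o) o :=
      fun o hmv => (key o).choose_spec hmv
    have hMvf : ∀ o, o ∉ p (qown o) → f o ∉ p (qown (f o)) := by
      intro o hmv
      obtain ⟨h1, h2, _⟩ := hf o hmv
      intro hcon
      have e1 : qown (f o) = pown (f o) := hpeq (f o) _ hcon
      have e2 : qown o = pown (f o) := hpeq (f o) _ h1
      have e3 : qown o = qown (f o) := e2.trans e1.symm
      exact h2 (by rw [e3]; exact hqmem (f o))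
    -- starting point
    have hC0 : (q i0 \ p i0).Nonempty := by
      rw [Finset.nonempty_iff_ne_empty]
      intro hemp
      have hsub : q i0 ⊆ p i0 := by
        intro x hx
        by_contra hxp
        have : x ∈ q i0 \ p i0 := Finset.mem_sdiff.mpr ⟨hx, hxp⟩
        rw [hemp] at this
        exact absurd this (Finset.notMem_empty x)
      have : ∑ o ∈ q i0, u' i0 o ≤ ∑ o ∈ p i0, u' i0 o :=
        Finset.sum_le_sum_of_subset_of_nonneg hsub (fun o _ _ => (hu'.2 i0 o).le)
      linarith
    obtain ⟨c0, hc0⟩ := hC0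
    have hc0mv : c0 ∉ p (qown c0) := by
      rcases Finset.mem_sdiff.mp hc0 with ⟨hc1, hc2⟩
      rwa [← hqeq c0 i0 hc1]
    have hMviter : ∀ t : ℕ, f^[t] c0 ∉ p (qown (f^[t] c0)) := by
      intro t
      induction t with
      | zero => exact hc0mv
      | succ t iht =>
        rw [Function.iterate_succ_apply']
        exact hMvf _ iht
    -- find a cycle
    obtain ⟨t1, t2, htne, hteq⟩ :
        ∃ t1 t2 : ℕ, t1 ≠ t2 ∧ f^[t1] c0 = f^[t2] c0 := by
      obtain ⟨t1, t2, hne, heq⟩ := Finite.exists_ne_map_eq_of_infinite (fun t : ℕ => f^[t] c0)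
      exact ⟨t1, t2, hne, heq⟩
    obtain ⟨ostar, k, hkpos, hper, hostarmv⟩ :
        ∃ (ostar : O) (k : ℕ), 0 < k ∧ f^[k] ostar = ostar ∧
          ∀ t : ℕ, f^[t] ostar ∉ p (qown (f^[t] ostar)) := by
      rcases Nat.lt_or_ge t1 t2 with hlt | hge
      · refine ⟨f^[t1] c0, t2 - t1, by omega, ?_, ?_⟩
        · rw [← Function.iterate_add_apply]
          rw [(by omega : t2 - t1 + t1 = t2)]
          exact hteq.symm
        · intro t
          rw [← Function.iterate_add_apply]
          exact hMviter (t + t1)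
      · have hlt : t2 < t1 := by omega
        refine ⟨f^[t2] c0, t1 - t2, by omega, ?_, ?_⟩
        · rw [← Function.iterate_add_apply]
          rw [(by omega : t1 - t2 + t2 = t1)]
          exact hteq
        · intro t
          rw [← Function.iterate_add_apply]
          exact hMviter (t + t2)
    set cyc : Finset O := (Finset.range k).image (fun t => f^[t] ostar) with hcycdef
    have hcyc_mem : ostar ∈ cyc := by
      apply Finset.mem_image.mpr
      exact ⟨0, Finset.mem_range.mpr hkpos, rfl⟩
    have hMvcyc : ∀ o ∈ cyc, o ∉ p (qown o) := by
      intro o ho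
      obtain ⟨t, _, rfl⟩ := Finset.mem_image.mp ho
      exact hostarmv t
    have hfcyc : ∀ o ∈ cyc, f o ∈ cyc := by
      intro o ho
      obtain ⟨t, ht, rfl⟩ := Finset.mem_image.mp ho
      rw [← Function.iterate_succ_apply' f t ostar]
      show f^[t+1] ostar ∈ cyc
      rcases Nat.lt_or_ge (t+1) k with h | h
      · exact Finset.mem_image.mpr ⟨t+1, Finset.mem_range.mpr h, rfl⟩
      · have hk1 : t + 1 = k := by
          have := Finset.mem_range.mp ht
          omega
        rw [hk1, hper]
        exact hcyc_mem
    have hsurj : ∀ o ∈ cyc, ∃ o', o' ∈ cyc ∧ f o' = o := by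
      intro o ho
      obtain ⟨t, ht, rfl⟩ := Finset.mem_image.mp ho
      have htk := Finset.mem_range.mp ht
      rcases Nat.eq_zero_or_pos t with rfl | htpos
      · refine ⟨f^[k-1] ostar, Finset.mem_image.mpr ⟨k-1, Finset.mem_range.mpr (by omega), rfl⟩, ?_⟩
        rw [← Function.iterate_succ_apply' f (k-1) ostar]
        show f^[k-1+1] ostar = f^[0] ostar
        rw [(by omega : k - 1 + 1 = k), hper]
        rfl
      · refine ⟨f^[t-1] ostar, Finset.mem_image.mpr ⟨t-1, Finset.mem_range.mpr (by omega), rfl⟩, ?_⟩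
        rw [← Function.iterate_succ_apply' f (t-1) ostar]
        show f^[t-1+1] ostar = f^[t] ostar
        congr 1
        omega
    have himg : cyc.image f = cyc := by
      apply Finset.Subset.antisymm
      · intro o' ho'
        obtain ⟨o, ho, rfl⟩ := Finset.mem_image.mp ho'
        exact hfcyc o ho
      · intro o ho
        obtain ⟨o', ho', rfl⟩ := hsurj o ho
        exact Finset.mem_image_of_mem f ho'
    have hinj : Set.InjOn f ↑cyc := by
      apply Finset.injOn_of_card_image_eq
      rw [himg]
    -- in/out sets per agent
    set ins : N → Finset O := fun h => cyc.filter (fun o => qown o = h) with hinsdef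
    set outs : N → Finset O := fun h => cyc.filter (fun o => pown o = h) with houtsdef
    have hpown_f : ∀ o ∈ cyc, pown (f o) = qown o := by
      intro o ho
      exact (hpeq (f o) (qown o) (hf o (hMvcyc o ho)).1).symm
    have houts_img : ∀ h, outs h = (ins h).image f := by
      intro h
      apply Finset.Subset.antisymm
      · intro o' ho'
        rcases Finset.mem_filter.mp ho' with ⟨hcy, hpo⟩
        obtain ⟨o, ho, rfl⟩ := hsurj o' hcy
        refine Finset.mem_image_of_mem f (Finset.mem_filter.mpr ⟨ho, ?_⟩)
        rw [← hpown_f o ho, hpo]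
      · intro o' ho'
        obtain ⟨o, ho, rfl⟩ := Finset.mem_image.mp ho'
        rcases Finset.mem_filter.mp ho with ⟨hcy, hqo⟩
        exact Finset.mem_filter.mpr ⟨hfcyc o hcy, by rw [hpown_f o hcy, hqo]⟩
    have hins_q : ∀ h, ∀ o ∈ ins h, o ∈ q h := by
      intro h o ho
      rcases Finset.mem_filter.mp ho with ⟨_, hqo⟩
      rw [← hqo]; exact hqmem o
    have hins_np : ∀ h, ∀ o ∈ ins h, o ∉ p h := by
      intro h o ho
      rcases Finset.mem_filter.mp ho with ⟨hcy, hqo⟩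
      rw [← hqo]; exact hMvcyc o hcy
    have houts_p : ∀ h, ∀ o ∈ outs h, o ∈ p h := by
      intro h o ho
      rcases Finset.mem_filter.mp ho with ⟨_, hpo⟩
      rw [← hpo]; exact hpmem o
    have houts_nq : ∀ h, ∀ o' ∈ outs h, o' ∉ q h := by
      intro h o' ho'
      rcases Finset.mem_filter.mp ho' with ⟨hcy, hpo⟩
      obtain ⟨o, ho, rfl⟩ := hsurj o' hcy
      have h1 : qown o = h := by rw [← hpown_f o ho, hpo]
      rw [← h1]
      exact (hf o (hMvcyc o ho)).2.1
    have hcyc_inter_p : ∀ h, p h ∩ cyc = outs h := by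
      intro h
      ext o
      simp only [Finset.mem_inter, Finset.mem_filter, houtsdef]
      constructor
      · rintro ⟨hop, hoc⟩
        exact ⟨hoc, (hpeq o h hop).symm⟩
      · rintro ⟨hoc, hpo⟩
        exact ⟨by rw [← hpo]; exact hpmem o, hoc⟩
    have hcyc_inter_q : ∀ h, q h ∩ cyc = ins h := by
      intro h
      ext o
      simp only [Finset.mem_inter, Finset.mem_filter, hinsdef]
      constructor
      · rintro ⟨hoq, hoc⟩
        exact ⟨hoc, (hqeq o h hoq).symm⟩
      · rintro ⟨hoc, hqo⟩
        exact ⟨by rw [← hqo]; exact hqmem o, hoc⟩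
    have hinj_ins : ∀ h, ∀ x ∈ ins h, ∀ y ∈ ins h, f x = f y → x = y := by
      intro h x hx y hy hxy
      exact hinj (Finset.mem_filter.mp hx).1 (Finset.mem_filter.mp hy).1 hxy
    have hfle : ∀ h, ∀ o ∈ ins h, u' h (f o) ≤ u' h o := by
      intro h o ho
      rcases Finset.mem_filter.mp ho with ⟨hcy, hqo⟩
      have := (hf o (hMvcyc o hcy)).2.2
      rwa [hqo] at this
    by_cases hstr : ∃ o ∈ cyc, u' (qown o) (f o) < u' (qown o) o
    · -- strict cycle: build an improvement from p, contradicting hPO₀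
      obtain ⟨ob, hob, hoblt⟩ := hstr
      set hb := qown ob with hhbdef
      set q2 : N → Finset O := fun h => (p h \ cyc) ∪ ins h with hq2def
      have hq2part : IsPartition q2 := by
        intro o
        by_cases ho : o ∈ cyc
        · refine ⟨qown o, Finset.mem_union_right _ (Finset.mem_filter.mpr ⟨ho, rfl⟩), ?_⟩
          intro a ha
          rcases Finset.mem_union.mp ha with h1 | h1
          · exact absurd ho (Finset.mem_sdiff.mp h1).2
          · exact (Finset.mem_filter.mp h1).2.symm
        · refine ⟨pown o, Finset.mem_union_left _ (Finset.mem_sdiff.mpr ⟨hpmem o, ho⟩), ?_⟩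
          intro a ha
          rcases Finset.mem_union.mp ha with h1 | h1
          · exact (hpeq o a (Finset.mem_sdiff.mp h1).1).symm ▸ rfl
          · exact absurd (Finset.mem_filter.mp h1).1 ho
      have hq2sum : ∀ h, ∑ o ∈ q2 h, u₀ h o
          = (∑ o ∈ p h, u₀ h o) - (∑ o ∈ ins h, u₀ h (f o)) + (∑ o ∈ ins h, u₀ h o) := by
        intro h
        have hdisj : Disjoint (p h \ cyc) (ins h) := by
          rw [Finset.disjoint_right]
          intro o ho
          exact fun hcon => (Finset.mem_sdiff.mp hcon).2 (Finset.mem_filter.mp ho).1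
        have e1 : (∑ o ∈ p h ∩ cyc, u₀ h o) + (∑ o ∈ p h \ cyc, u₀ h o) = ∑ o ∈ p h, u₀ h o :=
          Finset.sum_inter_add_sum_sdiff _ _ _
        have e2 : (∑ o ∈ p h ∩ cyc, u₀ h o) = ∑ o ∈ ins h, u₀ h (f o) := by
          rw [hcyc_inter_p h, houts_img h]
          exact Finset.sum_image (hinj_ins h)
        rw [hq2def]
        simp only []
        rw [Finset.sum_union hdisj]
        linarith
      have hptle : ∀ h, ∀ o ∈ ins h, u₀ h (f o) ≤ u₀ h o := by
        intro h o ho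
        have h1 := hfle h o ho
        rcases Finset.mem_filter.mp ho with ⟨hcy, hqo⟩
        have hr : r h o (f o) := (hu'.1 h o (f o)).mpr h1
        exact (hu₀.1 h o (f o)).mp hr
      apply hPO₀
      refine ⟨q2, hq2part, ?_, hb, ?_⟩
      · intro h
        rw [hq2sum h]
        have : (∑ o ∈ ins h, u₀ h (f o)) ≤ ∑ o ∈ ins h, u₀ h o :=
          Finset.sum_le_sum (hptle h)
        linarith
      · rw [hq2sum hb]
        have hobin : ob ∈ ins hb := Finset.mem_filter.mpr ⟨hob, rfl⟩
        have hlt : u₀ hb (f ob) < u₀ hb ob := by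
          have hnr : ¬ r hb (f ob) ob := by
            intro hr
            have := (hu'.1 hb (f ob) ob).mp hr
            rw [hhbdef] at this
            exact absurd hoblt (not_lt.mpr this)
          have := (hu₀.1 hb (f ob) ob)
          by_contra hcon
          push_neg at hcon
          exact hnr (this.mpr hcon)
        have : (∑ o ∈ ins hb, u₀ hb (f o)) < ∑ o ∈ ins hb, u₀ hb o :=
          Finset.sum_lt_sum (hptle hb) ⟨ob, hobin, hlt⟩
        linarith
    · -- neutral cycle: cancel it and recurse
      push_neg at hstr
      have hEq : ∀ o ∈ cyc, u' (qown o) (f o) = u' (qown o) o := by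
        intro o ho
        exact le_antisymm ((hf o (hMvcyc o ho)).2.2) (hstr o ho)
      set q3 : N → Finset O := fun h => (q h \ cyc) ∪ outs h with hq3def
      have hq3part : IsPartition q3 := by
        intro o
        by_cases ho : o ∈ cyc
        · refine ⟨pown o, Finset.mem_union_right _ (Finset.mem_filter.mpr ⟨ho, rfl⟩), ?_⟩
          intro a ha
          rcases Finset.mem_union.mp ha with h1 | h1
          · exact absurd ho (Finset.mem_sdiff.mp h1).2
          · exact (Finset.mem_filter.mp h1).2.symm
        · refine ⟨qown o, Finset.mem_union_left _ (Finset.mem_sdiff.mpr ⟨hqmem o, ho⟩), ?_⟩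
          intro a ha
          rcases Finset.mem_union.mp ha with h1 | h1
          · exact (hqeq o a (Finset.mem_sdiff.mp h1).1).symm ▸ rfl
          · exact absurd (Finset.mem_filter.mp h1).1 ho
      have hq3sum : ∀ h, ∑ o ∈ q3 h, u' h o = ∑ o ∈ q h, u' h o := by
        intro h
        have hdisj : Disjoint (q h \ cyc) (outs h) := by
          rw [Finset.disjoint_right]
          intro o ho
          exact fun hcon => (Finset.mem_sdiff.mp hcon).2 (Finset.mem_filter.mp ho).1
        have e1 : (∑ o ∈ q h ∩ cyc, u' h o) + (∑ o ∈ q h \ cyc, u' h o) = ∑ o ∈ q h, u' h o :=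
          Finset.sum_inter_add_sum_sdiff _ _ _
        have e2 : (∑ o ∈ outs h, u' h o) = ∑ o ∈ ins h, u' h (f o) := by
          rw [houts_img h]
          exact Finset.sum_image (hinj_ins h)
        have e3 : (∑ o ∈ ins h, u' h (f o)) = ∑ o ∈ ins h, u' h o := by
          apply Finset.sum_congr rfl
          intro o ho
          rcases Finset.mem_filter.mp ho with ⟨hcy, hqo⟩
          have := hEq o hcy
          rwa [hqo] at this
        rw [hq3def]
        simp only []
        rw [Finset.sum_union hdisj, e2, e3, ← hcyc_inter_q h]
        linarith
      have hq3dom : Dominates u' q3 p := by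
        refine ⟨fun h => ?_, i0, ?_⟩
        · rw [hq3sum h]; exact hwk h
        · rw [hq3sum i0]; exact hstrict
      have hq3meas : (∑ h, (q3 h \ p h).card) ≤ n := by
        have hdiffeq : ∀ h, q3 h \ p h = (q h \ p h) \ cyc := by
          intro h
          ext o
          constructor
          · intro ho
            rcases Finset.mem_sdiff.mp ho with ⟨ho1, ho2⟩
            rcases Finset.mem_union.mp ho1 with h1 | h1
            · rcases Finset.mem_sdiff.mp h1 with ⟨hoq, hoc⟩
              exact Finset.mem_sdiff.mpr ⟨Finset.mem_sdiff.mpr ⟨hoq, ho2⟩, hoc⟩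
            · exact absurd (houts_p h o h1) ho2
          · intro ho
            rcases Finset.mem_sdiff.mp ho with ⟨ho1, hoc⟩
            rcases Finset.mem_sdiff.mp ho1 with ⟨hoq, hop⟩
            exact Finset.mem_sdiff.mpr
              ⟨Finset.mem_union_left _ (Finset.mem_sdiff.mpr ⟨hoq, hoc⟩), hop⟩
        have hstrictcard : ∑ h, (q3 h \ p h).card < ∑ h, (q h \ p h).card := by
          apply Finset.sum_lt_sum
          · intro h _
            rw [hdiffeq h]
            exact Finset.card_le_card (Finset.sdiff_subset.trans (le_refl _))
          · refine ⟨qown ostar, Finset.mem_univ _, ?_⟩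
            rw [hdiffeq (qown ostar)]
            apply Finset.card_lt_card
            rw [Finset.ssubset_iff_of_subset Finset.sdiff_subset]
            exact ⟨ostar, Finset.mem_sdiff.mpr ⟨hqmem ostar, hMvcyc ostar hcyc_mem⟩, fun hcon =>
              (Finset.mem_sdiff.mp hcon).2 hcyc_mem⟩
        omega
      exact ih q3 hq3part hq3dom hq3meas
end Hard

/-- Characterization of necessary Pareto optimality: p is necessarily Pareto
optimal iff p is possibly Pareto optimal and admits no one-for-two Pareto
improvement swap. -/
theorem necessarily_pareto_optimal_iff
    {N O : Type*} [Fintype N] [Fintype O]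
    (r : N → O → O → Prop)
    (htot : ∀ i a b, r i a b ∨ r i b a)
    (htrans : ∀ i a b c, r i a b → r i b c → r i a c)
    (p : N → Finset O) (hp : IsPartition p) :
    NecPO r p ↔ (PossPO r p ∧ ¬ HasSwap r p) := by
  constructor
  · intro hnec
    constructor
    · exact ⟨_, consistent_exists htot htrans, hnec _ (consistent_exists htot htrans)⟩
    · intro hsw
      obtain ⟨u, hcons, hnpo⟩ := swap_not_nec htot htrans hp hsw
      exact hnpo (hnec u hcons)
  · rintro ⟨⟨u₀, hu₀, hPO₀⟩, hnosw⟩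
    intro u' hu'
    exact no_improvement hp hnosw hu₀ hPO₀ hu'
end

section
/- If an assignment p admits no one-for-two Pareto improvement swap, then every agent's bundle consists of a set of her top remaining objects plus at most one additional lower-ranked object: formally, p(i) = T_p(i) ∪ w_p(i) where T_p(i) = {o ∈ p(i) : there is no o' ∉ p(i) with o' ≻_i o} and |w_p(i)| ≤ 1. -/
open Finset
open scoped Classical

/-- If p admits no one-for-two Pareto improvement swap, then each agent holds at
most one object to which some object outside her bundle is strictly preferred. -/
theorem no_swap_implies_at_most_one_nontop
    {N O : Type*} [Fintype N] [Fintype O]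
    (r : N → O → O → Prop)
    (htot : ∀ i a b, r i a b ∨ r i b a)
    (htrans : ∀ i a b c, r i a b → r i b c → r i a c)
    (p : N → Finset O) (hp : IsPartition p)
    (hnoswap : ¬ HasSwap r p) :
    ∀ i : N, ((p i).filter
      (fun o => ∃ o' : O, o' ∉ p i ∧ r i o' o ∧ ¬ r i o o')).card ≤ 1 := by
  intro i
  rw [Finset.card_le_one]
  intro a ha b hb
  simp only [Finset.mem_filter] at ha hb
  by_contra hne
  obtain ⟨hap, o', ho'p, hro', hnro'⟩ := ha
  obtain ⟨hbp, o'', ho''p, hro'', hnro''⟩ := hb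
  apply hnoswap
  rcases htot i a b with hab | hba
  ·
    obtain ⟨j, hj⟩ := hp o'
    refine ⟨i, j, a, b, o', ?_, hne, hap, hbp, hj.1, ⟨hro', hnro'⟩, hab⟩
    intro h; exact ho'p (h ▸ hj.1)
  · obtain ⟨j, hj⟩ := hp o''
    refine ⟨i, j, b, a, o'', ?_, Ne.symm hne, hbp, hap, hj.1, ⟨hro'', hnro''⟩, hba⟩
    intro h; exact ho''p (h ▸ hj.1)
end
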